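/- arXiv:1511.06905 — 6 statements merged into one kernel-verified Lean document; each statement's English description precedes it below -/
import Mathlib

section
/- With the setup of the edge replacement problem: for every crossing edge (x, y) in C(e_i) (i.e., x ∈ T_1(e_i), y ∈ T_2(e_i), (x,y) ≠ e_i), the distance from y to t in G \ {e_i} equals the distance from y to t in G. -/
open Classical SimpleGraph

noncomputable section

variable {V : Type*}

/-- Total weight of a walk, summing `w` over its darts. -/
def walkWeight (G : SimpleGraph V) (w : V → V → ℝ) {u v : V} (p : G.Walk u v) : ℝ :=
  (p.darts.map fun d => w d.fst d.snd).sum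

/-- Weighted shortest-path distance: infimum of walk weights. -/
def wdist (G : SimpleGraph V) (w : V → V → ℝ) (u v : V) : ℝ :=
  sInf {r | ∃ p : G.Walk u v, walkWeight G w p = r}

/-- The graph obtained by deleting a set of vertices (kept on the same vertex type). -/
def delVerts (G : SimpleGraph V) (S : Set V) : SimpleGraph V where
  Adj a b := G.Adj a b ∧ a ∉ S ∧ b ∉ S
  symm := ⟨fun a b h => ⟨h.1.symm, h.2.2, h.2.1⟩⟩
  loopless := ⟨fun a h => G.loopless.irrefl a h.1⟩

/-- `u` is in the subtree of `T` rooted at the `k`-th vertex of the path `vp`. -/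
def inSub (T : SimpleGraph V) (vp : ℕ → V) (k : ℕ) (u : V) : Prop :=
  k = 0 ∨ (T.deleteEdges {s(vp (k-1), vp k)}).Reachable (vp k) u

/-- The label of a vertex: the largest `k ≤ l` with `u` in the subtree rooted at `vp k`. -/
def label (T : SimpleGraph V) (vp : ℕ → V) (l : ℕ) (u : V) : ℕ :=
  sSup {k | k ≤ l ∧ inSub T vp k u}

namespace Aux

variable {G H : SimpleGraph V} {w : V → V → ℝ} {u v z : V}

@[simp] lemma ww_nil : walkWeight G w (Walk.nil' u) = 0 := by simp [walkWeight]

@[simp] lemma ww_cons (h : G.Adj u v) (q : G.Walk v z) :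
    walkWeight G w (Walk.cons h q) = w u v + walkWeight G w q := by
  simp [walkWeight]

@[simp] lemma ww_append (p : G.Walk u v) (q : G.Walk v z) :
    walkWeight G w (p.append q) = walkWeight G w p + walkWeight G w q := by
  simp [walkWeight, Walk.darts_append]

lemma ww_nonneg (hw : ∀ a b, G.Adj a b → 0 ≤ w a b) (p : G.Walk u v) :
    0 ≤ walkWeight G w p := by
  induction p with
  | nil => simp
  | cons h q ih => simpa using add_nonneg (hw _ _ h) ih

lemma ww_reverse (hws : ∀ a b, w a b = w b a) (p : G.Walk u v) :
    walkWeight G w p.reverse = walkWeight G w p := by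
  induction p with
  | nil => simp
  | cons h q ih =>
    rw [Walk.reverse_cons, ww_append, ih, ww_cons]
    simp [hws _ _]
    ring

lemma walk_change (H : SimpleGraph V) (p : G.Walk u v)
    (h : ∀ e ∈ p.edges, e ∈ H.edgeSet) :
    ∃ q : H.Walk u v, walkWeight H w q = walkWeight G w p ∧ q.edges = p.edges := by
  induction p with
  | nil => exact ⟨Walk.nil, by simp, by simp⟩
  | @cons a b c ha q ih =>
    obtain ⟨q', hq1, hq2⟩ := ih (fun e he => h e (by simp [Walk.edges_cons, he]))
    have hH : H.Adj a b := (H.mem_edgeSet).mp (h s(a, b) (by simp [Walk.edges_cons]))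
    exact ⟨Walk.cons hH q', by simp [hq1], by simp [hq2]⟩

lemma bdd (hw : ∀ a b, G.Adj a b → 0 ≤ w a b) :
    BddBelow {r | ∃ p : G.Walk u v, walkWeight G w p = r} :=
  ⟨0, fun _ ⟨p, hp⟩ => hp ▸ ww_nonneg hw p⟩

lemma wdist_le (hw : ∀ a b, G.Adj a b → 0 ≤ w a b) (q : G.Walk u v) :
    wdist G w u v ≤ walkWeight G w q :=
  csInf_le (bdd hw) ⟨q, rfl⟩

lemma split (p : G.Walk u v) (j : ℕ) (hj : j < p.length) :
    ∃ (A : G.Walk u (p.getVert j)) (h : G.Adj (p.getVert j) (p.getVert (j+1)))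
      (S : G.Walk (p.getVert (j+1)) v), p = A.append (Walk.cons h S) := by
  induction p generalizing j with
  | nil => simp at hj
  | @cons a b c ha q ih =>
    cases j with
    | zero =>
      refine ⟨(Walk.nil' a).copy rfl (by simp), ?_,
        q.copy (by simp [Walk.getVert_cons_succ]) rfl, ?_⟩
      · simpa [Walk.getVert_cons_succ] using ha
      · apply Walk.ext_support
        rw [Walk.support_append, Walk.support_copy]
        show a :: q.support = [a] ++ (q.copy _ _).support
        rw [Walk.support_copy]
        rfl
    | succ k =>
      have hk : k < q.length := by simpa [Walk.length_cons] using hj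
      obtain ⟨A, h, S, hS⟩ := ih k hk
      refine ⟨Walk.cons ha (A.copy rfl (by simp [Walk.getVert_cons_succ])), ?_,
        S.copy (by simp [Walk.getVert_cons_succ]) rfl, ?_⟩
      · simpa [Walk.getVert_cons_succ] using h
      · simp [hS]

lemma exists_decomp {e : Sym2 V} (p : G.Walk u v) (he : e ∈ p.edges) :
    ∃ (c d : V) (A : G.Walk u c) (h : G.Adj c d) (S : G.Walk d v),
      s(c, d) = e ∧ p = A.append (Walk.cons h S) := by
  induction p with
  | nil => simp at he
  | @cons a b c ha q ih =>
    by_cases hh : s(a, b) = e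
    · exact ⟨a, b, Walk.nil, ha, q, hh, by simp⟩
    · have he' : e ∈ q.edges := by
        rcases (by simpa [Walk.edges_cons] using he) with h1 | h1
        · exact absurd h1.symm hh
        · exact h1
      obtain ⟨c', d', A, h, S, h1, h2⟩ := ih he'
      exact ⟨c', d', Walk.cons ha A, h, S, h1, by simp [h2]⟩

lemma ww_dropUntil_le (hw : ∀ a b, G.Adj a b → 0 ≤ w a b) (p : G.Walk u v)
    (hz : z ∈ p.support) :
    walkWeight G w (p.dropUntil z hz) ≤ walkWeight G w p := by
  conv_rhs => rw [← p.take_spec hz]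
  rw [ww_append]
  have := ww_nonneg hw (p.takeUntil z hz) (w := w)
  linarith

lemma ww_bypass_le (hw : ∀ a b, G.Adj a b → 0 ≤ w a b) (p : G.Walk u v) :
    walkWeight G w p.bypass ≤ walkWeight G w p := by
  induction p with
  | nil => simp [Walk.bypass]
  | @cons a b c ha q ih =>
    rw [Walk.bypass]
    split_ifs with hs
    · calc walkWeight G w (q.bypass.dropUntil a hs) ≤ walkWeight G w q.bypass :=
            ww_dropUntil_le hw _ _
        _ ≤ walkWeight G w q := ih
        _ ≤ walkWeight G w (Walk.cons ha q) := by
            have := hw _ _ ha; simp; linarith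
    · simp only [ww_cons]
      have := ih
      linarith

lemma path_ww_eq_wdist (hac : G.IsAcyclic) (hw : ∀ a b, G.Adj a b → 0 ≤ w a b)
    (P : G.Walk u v) (hP : P.IsPath) : walkWeight G w P = wdist G w u v := by
  refine le_antisymm ?_ (csInf_le (bdd hw) ⟨P, rfl⟩)
  refine le_csInf ⟨walkWeight G w P, P, rfl⟩ ?_
  rintro r ⟨W, rfl⟩
  have huniq : (⟨P, hP⟩ : G.Path u v) = ⟨W.bypass, W.bypass_isPath⟩ := hac.path_unique _ _
  have hPW : P = W.bypass := congrArg Subtype.val huniq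
  rw [hPW]
  exact ww_bypass_le hw W

lemma ww_mapLe (hle : G ≤ H) (p : G.Walk u v) :
    walkWeight H w (p.map (Hom.ofLE hle)) = walkWeight G w p := by
  induction p with
  | nil => simp [walkWeight]
  | cons h q ih =>
    simp only [Walk.map_cons, walkWeight, Walk.darts_cons, List.map_cons, List.sum_cons] at *
    simp only [Hom.mapDart_apply, Hom.ofLE, Function.comp_def] at *
    exact congrArg₂ (· + ·) rfl ih

lemma edges_mapLe (hle : G ≤ H) (p : G.Walk u v) :
    (p.map (Hom.ofLE hle)).edges = p.edges := by
  rw [Walk.edges_map]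
  have : (Sym2.map ⇑(Hom.ofLE hle)) = id := Sym2.map_id
  simp [this]

lemma support_mapLe (hle : G ≤ H) (p : G.Walk u v) :
    (p.map (Hom.ofLE hle)).support = p.support := by
  rw [Walk.support_map]
  have : ⇑(Hom.ofLE hle) = id := rfl
  rw [this, List.map_id]

lemma isPath_mapLe (hle : G ≤ H) {p : G.Walk u v} (hp : p.IsPath) :
    (p.map (Hom.ofLE hle)).IsPath :=
  Walk.map_isPath_of_injective (fun _ _ h => h) hp

end Aux

theorem stmt1 {V : Type*}
    (G : SimpleGraph V) (hconn : G.Connected) (w : V → V → ℝ)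
    (hw : ∀ a b, G.Adj a b → 0 < w a b) (hws : ∀ a b, w a b = w b a)
    (s t : V) (p : G.Walk s t) (hp : p.IsPath)
    (hps : walkWeight G w p = wdist G w s t)
    (T : SimpleGraph V) (hTG : T ≤ G) (hT : T.IsTree)
    (hSPT : ∀ v, wdist T w s v = wdist G w s v)
    (hPT : ∀ e ∈ p.edges, e ∈ T.edgeSet)
    (i : ℕ) (hi1 : 1 ≤ i) (hil : i ≤ p.length)
    (x y : V) (hxy : G.Adj x y) (hne : s(x, y) ≠ s(p.getVert (i-1), p.getVert i))
    (hx : (T.deleteEdges {s(p.getVert (i-1), p.getVert i)}).Reachable s x)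
    (hy : (T.deleteEdges {s(p.getVert (i-1), p.getVert i)}).Reachable (p.getVert i) y) :
    wdist (G.deleteEdges {s(p.getVert (i-1), p.getVert i)}) w y t = wdist G w y t := by
  classical
  set a := p.getVert (i-1) with ha_def
  set b := p.getVert i with hb_def
  set e : Sym2 V := s(a, b) with he_def
  set G' := G.deleteEdges {e} with hG'_def
  set T' := T.deleteEdges {e} with hT'_def
  -- nonneg weights
  have hw0 : ∀ a b, G.Adj a b → 0 ≤ w a b := fun a b h => (hw a b h).le
  have hwG' : ∀ a b, G'.Adj a b → 0 ≤ w a b := fun a b h => hw0 a b (G.deleteEdges_le _ h)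
  have hwT : ∀ a b, T.Adj a b → 0 ≤ w a b := fun a b h => hw0 a b (hTG h)
  have hT'T : T' ≤ T := T.deleteEdges_le _
  have hT'G : T' ≤ G := le_trans hT'T hTG
  have hT'G' : T' ≤ G' := by
    intro u v h
    rw [hG'_def, deleteEdges_adj]
    rcases (by rwa [hT'_def, deleteEdges_adj] at h) with ⟨h1, h2⟩
    exact ⟨hTG h1, h2⟩
  -- split p at index i-1
  have hii : i - 1 + 1 = i := Nat.succ_pred_eq_of_pos hi1
  have hsp := Aux.split p (i-1) (by omega)
  rw [hii] at hsp
  obtain ⟨A0, hab, Sp, hp_eq⟩ := hsp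
  -- basic edge facts
  have hedges : p.edges = A0.edges ++ e :: Sp.edges := by
    have h := congrArg Walk.edges hp_eq
    rw [h]; simp [Walk.edges_append, Walk.edges_cons]; rfl
  have he_mem : e ∈ p.edges := by rw [hedges]; simp
  have heT : T.Adj a b := (T.mem_edgeSet).mp (hPT e he_mem)
  have hnodup : p.edges.Nodup := hp.isTrail.edges_nodup
  have hnd : (A0.edges ++ e :: Sp.edges).Nodup := hedges ▸ hnodup
  have heA : e ∉ A0.edges := fun hmem =>
    (List.disjoint_of_nodup_append hnd) hmem (by simp)
  have heS : e ∉ Sp.edges := by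
    have := (List.nodup_append.mp hnd).2.1
    exact (List.nodup_cons.mp this).1
  -- bridge
  have hbr : ¬ T'.Reachable a b := by
    have hbridge : T.IsBridge s(a, b) :=
      (isAcyclic_iff_forall_adj_isBridge.mp hT.IsAcyclic) heT
    exact isBridge_iff.mp hbridge
  -- edges of A0 and Sp are in T' (as edge sets)
  have hA0T' : ∀ ed ∈ A0.edges, ed ∈ T'.edgeSet := by
    intro ed hed
    rw [hT'_def, edgeSet_deleteEdges]
    refine ⟨hPT ed (by rw [hedges]; simp [hed]), ?_⟩
    simp only [Set.mem_singleton_iff]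
    exact fun h => heA (h ▸ hed)
  have hSpT' : ∀ ed ∈ Sp.edges, ed ∈ T'.edgeSet := by
    intro ed hed
    rw [hT'_def, edgeSet_deleteEdges]
    refine ⟨hPT ed (by rw [hedges]; simp [hed]), ?_⟩
    simp only [Set.mem_singleton_iff]
    exact fun h => heS (h ▸ hed)
  -- the path from s to a in T'
  obtain ⟨A0T', hA0w, hA0e⟩ := Aux.walk_change (w := w) T' A0 hA0T'
  -- the suffix walk Sp in G avoids e; key weight identity
  have hwp : walkWeight G w p = walkWeight G w A0 + w a b + walkWeight G w Sp := by
    have h := congrArg (walkWeight G w) hp_eq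
    rw [h]; simp; ring
  -- key recursion
  have key : ∀ n : ℕ, ∀ Q : G.Walk y t, Q.edges.count e ≤ n →
      ∃ Q' : G'.Walk y t, walkWeight G' w Q' ≤ walkWeight G w Q := by
    intro n
    induction n with
    | zero =>
      intro Q hQ
      have hnot : e ∉ Q.edges := List.count_eq_zero.mp (Nat.le_zero.mp hQ)
      obtain ⟨Q', hQ'w, _⟩ := Aux.walk_change (w := w) G' Q (by
        intro ed hed
        rw [hG'_def, edgeSet_deleteEdges]
        exact ⟨Q.edges_subset_edgeSet hed, fun h => hnot ((Set.mem_singleton_iff.mp h) ▸ hed)⟩)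
      exact ⟨Q', le_of_eq hQ'w⟩
    | succ n ih =>
      intro Q hQ
      by_cases hin : e ∈ Q.edges
      · obtain ⟨c, d, Q1, hcd, Q2, hcde, hQdec⟩ := Aux.exists_decomp Q hin
        have hQedges : Q.edges = Q1.edges ++ e :: Q2.edges := by
          rw [hQdec]; simp [Walk.edges_append, Walk.edges_cons, hcde]
        have hcount : Q1.edges.count e + Q2.edges.count e + 1 = Q.edges.count e := by
          rw [hQedges]; simp [List.count_append, List.count_cons]; ring
        have hc1 : Q1.edges.count e ≤ n := by omega
        have hc2 : Q2.edges.count e ≤ n := by omega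
        have hwQ : walkWeight G w Q = walkWeight G w Q1 + w c d + walkWeight G w Q2 := by
          have h := congrArg (walkWeight G w) hQdec
          rw [h]; simp; ring
        rcases Sym2.eq_iff.mp hcde with ⟨hc, hd⟩ | ⟨hc, hd⟩
        · -- c = a, d = b : forward traversal
          subst hc; subst hd
          -- path b→y in T'
          obtain ⟨W0⟩ := hy
          set R0 := W0.bypass with hR0
          have hR0p : R0.IsPath := W0.bypass_isPath
          -- path s→a in T'
          set Ap := A0T'.bypass with hAp
          have hApp : Ap.IsPath := A0T'.bypass_isPath
          -- lift to T
          let ApT : T.Walk s a := Ap.map (Hom.ofLE hT'T)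
          let R0T : T.Walk b y := R0.map (Hom.ofLE hT'T)
          let W : T.Walk s y := ApT.append (Walk.cons heT R0T)
          have hWpath : W.IsPath := by
            rw [Walk.isPath_def, show W = ApT.append (Walk.cons heT R0T) from rfl,
              Walk.support_append, Walk.support_cons]
            simp only [List.tail_cons]
            rw [show ApT.support = Ap.support from Aux.support_mapLe hT'T Ap,
              show R0T.support = R0.support from Aux.support_mapLe hT'T R0]
            refine List.Nodup.append (hApp.support_nodup) (hR0p.support_nodup) ?_
            intro vtx h1 h2
            have hr1 : T'.Reachable s vtx := ⟨Ap.takeUntil vtx h1⟩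
            have hr2 : T'.Reachable b vtx := ⟨R0.takeUntil vtx h2⟩
            have hra : T'.Reachable s a := ⟨Ap⟩
            exact hbr (hra.symm.trans (hr1.trans hr2.symm))
          have hWw : walkWeight T w W =
              walkWeight T' w Ap + w a b + walkWeight T' w R0 := by
            show walkWeight T w (ApT.append (Walk.cons heT R0T)) = _
            rw [Aux.ww_append, Aux.ww_cons,
              show walkWeight T w ApT = walkWeight T' w Ap from Aux.ww_mapLe hT'T Ap,
              show walkWeight T w R0T = walkWeight T' w R0 from Aux.ww_mapLe hT'T R0]
            ring
          have hWd : walkWeight T w W = wdist T w s y :=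
            Aux.path_ww_eq_wdist hT.IsAcyclic hwT W hWpath
          -- compare with Ap (in G) followed by Q1.reverse
          have hcomp : wdist G w s y ≤ walkWeight T' w Ap + walkWeight G w Q1 := by
            have h1 : wdist G w s y ≤
                walkWeight G w ((Ap.map (Hom.ofLE hT'G)).append Q1.reverse) :=
              Aux.wdist_le hw0 _
            rwa [Aux.ww_append, Aux.ww_mapLe, Aux.ww_reverse hws] at h1
          have hR0small : walkWeight T' w R0 ≤ walkWeight G w Q1 := by
            have h1 : walkWeight T' w Ap + w a b + walkWeight T' w R0 = wdist G w s y := by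
              rw [← hWw, hWd, hSPT]
            nlinarith [hw a b (hTG heT)]
          -- new walk
          let N : G.Walk y t :=
            ((R0.reverse).map (Hom.ofLE hT'G)).append Q2
          have hNw : walkWeight G w N ≤ walkWeight G w Q := by
            show walkWeight G w
              (((R0.reverse).map (Hom.ofLE hT'G)).append Q2) ≤ _
            rw [Aux.ww_append, Aux.ww_mapLe, Aux.ww_reverse hws, hwQ]
            nlinarith [hw a b (hTG heT)]
          have hNc : N.edges.count e ≤ n := by
            show (((R0.reverse).map (Hom.ofLE hT'G)).append Q2).edges.count e ≤ n
            have hRe : e ∉ ((R0.reverse).map (Hom.ofLE hT'G)).edges := by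
              rw [Aux.edges_mapLe]
              intro hmem
              have := R0.reverse.edges_subset_edgeSet hmem
              rw [hT'_def, edgeSet_deleteEdges] at this
              exact this.2 rfl
            rw [Walk.edges_append, List.count_append,
              List.count_eq_zero.mpr hRe]
            simpa using hc2
          obtain ⟨Q', hQ'⟩ := ih N hNc
          exact ⟨Q', le_trans hQ' hNw⟩
        · -- c = b, d = a : backward traversal
          subst hc; subst hd
          -- bound the suffix Sp by Q2
          have hSple : walkWeight G w Sp ≤ walkWeight G w Q2 := by
            have hcomp := Aux.wdist_le (u := s) (v := t) hw0 (A0.append Q2)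
            rw [Aux.ww_append] at hcomp
            have hwp2 := hwp
            rw [hps] at hwp2
            nlinarith [hw a b (hTG heT)]
          let N : G.Walk y t := Q1.append Sp
          have hNw : walkWeight G w N ≤ walkWeight G w Q := by
            show walkWeight G w (Q1.append Sp) ≤ _
            rw [Aux.ww_append, hwQ]
            have hba : 0 ≤ w b a := by rw [hws b a]; exact (hw a b (hTG heT)).le
            linarith
          have hNc : N.edges.count e ≤ n := by
            show ((Q1.append Sp).edges).count e ≤ n
            rw [Walk.edges_append, List.count_append,
              List.count_eq_zero.mpr heS]
            simpa using hc1
          obtain ⟨Q', hQ'⟩ := ih N hNc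
          exact ⟨Q', le_trans hQ' hNw⟩
      · have hnot : e ∉ Q.edges := hin
        obtain ⟨Q', hQ'w, _⟩ := Aux.walk_change (w := w) G' Q (by
          intro ed hed
          rw [hG'_def, edgeSet_deleteEdges]
          exact ⟨Q.edges_subset_edgeSet hed, fun h => hnot ((Set.mem_singleton_iff.mp h) ▸ hed)⟩)
        exact ⟨Q', le_of_eq hQ'w⟩
  -- conclude
  obtain ⟨Q0⟩ := hconn.preconnected y t
  obtain ⟨Q0', hQ0'⟩ := key (Q0.edges.count e) Q0 le_rfl
  refine le_antisymm ?_ ?_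
  · refine le_csInf ⟨walkWeight G w Q0, Q0, rfl⟩ ?_
    rintro r ⟨Q, rfl⟩
    obtain ⟨Q', hQ'⟩ := key (Q.edges.count e) Q le_rfl
    exact le_trans (Aux.wdist_le hwG' Q') hQ'
  · refine le_csInf ⟨walkWeight G' w Q0', Q0', rfl⟩ ?_
    rintro r ⟨Q', rfl⟩
    obtain ⟨QG, hQGw, _⟩ := Aux.walk_change (w := w) G Q' (by
      intro ed hed
      have h2 := Q'.edges_subset_edgeSet hed
      rw [hG'_def, edgeSet_deleteEdges] at h2
      exact h2.1)
    exact le_trans (Aux.wdist_le hw0 QG) (le_of_eq hQGw)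
end
end

section
/- If y is a vertex in T_2(e_i) (the component of the shortest path tree T_s \ {e_i} containing v_i), then every shortest y-t path in G avoids the edge e_i; in particular d_G(v_{i-1}, y) > d_G(v_i, y) is impossible simultaneously with d_G(v_i, y) > d_G(v_{i-1}, y), yielding d_{G \ e_i}(y, t) = d_G(y, t). -/
open Classical SimpleGraph

noncomputable section

variable {V : Type*}

variable {G H : SimpleGraph V} {w : V → V → ℝ} {u v x y : V}

lemma walkWeight_nil : walkWeight G w (.nil : G.Walk u u) = 0 := by simp [walkWeight]

lemma walkWeight_cons (h : G.Adj u v) (q : G.Walk v x) :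
    walkWeight G w (.cons h q) = w u v + walkWeight G w q := by simp [walkWeight]

lemma walkWeight_append (q : G.Walk u v) (r : G.Walk v x) :
    walkWeight G w (q.append r) = walkWeight G w q + walkWeight G w r := by
  simp [walkWeight, Walk.darts_append]

lemma walkWeight_nonneg (hw0 : ∀ a b, G.Adj a b → 0 ≤ w a b) (q : G.Walk u v) :
    0 ≤ walkWeight G w q := by
  induction q with
  | nil => simp [walkWeight_nil]
  | cons h q ih => rw [walkWeight_cons]; have := hw0 _ _ h; linarith

lemma walkWeight_reverse (hws : ∀ a b, w a b = w b a) (q : G.Walk u v) :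
    walkWeight G w q.reverse = walkWeight G w q := by
  simp only [walkWeight, Walk.darts_reverse, List.map_reverse, List.sum_reverse, List.map_map]
  congr 1
  refine List.map_congr_left fun d _ => ?_
  simp [Dart.symm, hws d.fst d.snd]

lemma wdist_le (hw0 : ∀ a b, G.Adj a b → 0 ≤ w a b) (q : G.Walk u v) :
    wdist G w u v ≤ walkWeight G w q :=
  csInf_le ⟨0, fun r ⟨q', hq'⟩ => hq' ▸ walkWeight_nonneg hw0 q'⟩ ⟨q, rfl⟩

lemma wdist_nonneg (hw0 : ∀ a b, G.Adj a b → 0 ≤ w a b) : 0 ≤ wdist G w u v :=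
  Real.sInf_nonneg fun r ⟨q, hq⟩ => hq ▸ walkWeight_nonneg hw0 q

lemma exists_walk_lt (hne : Nonempty (G.Walk u v)) {ε : ℝ} (hε : 0 < ε) :
    ∃ q : G.Walk u v, walkWeight G w q < wdist G w u v + ε := by
  obtain ⟨r, ⟨q, hq⟩, hr⟩ := Real.lt_sInf_add_pos (s := {r | ∃ p : G.Walk u v, walkWeight G w p = r})
    ⟨_, hne.some, rfl⟩ hε
  exact ⟨q, hq ▸ hr⟩

/-- Transfer a walk to a supergraph-on-edges, preserving weight and edges. -/
lemma walk_transfer (q : G.Walk u v) (hq : ∀ e ∈ q.edges, e ∈ H.edgeSet) :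
    ∃ q' : H.Walk u v, walkWeight H w q' = walkWeight G w q ∧ q'.edges = q.edges := by
  induction q with
  | nil => exact ⟨.nil, by simp [walkWeight_nil], by simp⟩
  | @cons a c d h q ih =>
    obtain ⟨q', hq', he'⟩ := ih fun e he => hq e (by simp [he])
    have hadj : H.Adj a c := (H.mem_edgeSet).1 (hq s(a, c) (by simp))
    exact ⟨.cons hadj q', by rw [walkWeight_cons, walkWeight_cons, hq'],
      by simp [he']⟩

lemma wdist_mono (hw0 : ∀ a b, H.Adj a b → 0 ≤ w a b) (hle : G ≤ H)
    (hne : Nonempty (G.Walk u v)) : wdist H w u v ≤ wdist G w u v := by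
  refine le_csInf ⟨_, hne.some, rfl⟩ (fun r ⟨q, hq⟩ => ?_)
  obtain ⟨q', hq', -⟩ := walk_transfer (H := H) q
    (fun e he => SimpleGraph.edgeSet_mono hle (Walk.edges_subset_edgeSet q he))
  exact hq ▸ hq' ▸ wdist_le hw0 q'

lemma wdist_symm (hws : ∀ a b, w a b = w b a) : wdist G w u v = wdist G w v u := by
  unfold wdist
  congr 1
  ext r
  constructor
  · rintro ⟨q, rfl⟩; exact ⟨q.reverse, walkWeight_reverse hws q⟩
  · rintro ⟨q, rfl⟩; exact ⟨q.reverse, walkWeight_reverse hws q⟩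

lemma wdist_self_nonpos (hw0 : ∀ a b, G.Adj a b → 0 ≤ w a b) : wdist G w u u ≤ 0 := by
  simpa [walkWeight_nil] using wdist_le (u := u) (v := u) hw0 .nil

lemma wdist_triangle (hw0 : ∀ a b, G.Adj a b → 0 ≤ w a b)
    (h1 : Nonempty (G.Walk u v)) (h2 : Nonempty (G.Walk v x)) :
    wdist G w u x ≤ wdist G w u v + wdist G w v x := by
  refine le_of_forall_pos_le_add fun ε hε => ?_
  obtain ⟨q1, hq1⟩ := exists_walk_lt (w := w) h1 (half_pos hε)
  obtain ⟨q2, hq2⟩ := exists_walk_lt (w := w) h2 (half_pos hε)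
  have := wdist_le hw0 (q1.append q2)
  rw [walkWeight_append] at this
  linarith

lemma wdist_le_edge_add (hw0 : ∀ a b, G.Adj a b → 0 ≤ w a b) (h : G.Adj u v)
    (hne : Nonempty (G.Walk v x)) : wdist G w u x ≤ w u v + wdist G w v x := by
  refine le_of_forall_pos_le_add fun ε hε => ?_
  obtain ⟨q, hq⟩ := exists_walk_lt (w := w) hne hε
  have := wdist_le hw0 (Walk.cons h q)
  rw [walkWeight_cons] at this
  linarith

lemma sep_of_tree {T : SimpleGraph V} (hT : T.IsTree) {a b : V} (hab : T.Adj a b) :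
    ¬ (T.deleteEdges {s(a, b)}).Reachable a b := by
  rintro ⟨r0⟩
  classical
  set r : (T.deleteEdges {s(a, b)}).Path a b := r0.toPath with hr
  have hle : ∀ e ∈ (r : (T.deleteEdges {s(a, b)}).Walk a b).edges, e ∈ T.edgeSet := fun e he =>
    ((edgeSet_deleteEdges {s(a, b)}) ▸ (r : (T.deleteEdges {s(a,b)}).Walk a b).edges_subset_edgeSet he).1
  have hr1 : ((r : (T.deleteEdges {s(a, b)}).Walk a b).transfer T hle).IsPath :=
    Walk.IsPath.transfer hle r.2
  have hcons : (Walk.cons hab .nil : T.Walk a b).IsPath := by simp [hab.ne]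
  obtain ⟨P, -, hun⟩ := hT.existsUnique_path a b
  have heq : (r : (T.deleteEdges {s(a, b)}).Walk a b).transfer T hle = Walk.cons hab .nil := by
    rw [hun _ hr1, hun _ hcons]
  have hmem : s(a, b) ∈ ((r : (T.deleteEdges {s(a, b)}).Walk a b).transfer T hle).edges := by
    rw [heq]; simp
  rw [Walk.edges_transfer] at hmem
  have := (r : (T.deleteEdges {s(a, b)}).Walk a b).edges_subset_edgeSet hmem
  rw [edgeSet_deleteEdges] at this
  exact this.2 rfl

lemma walk_decomp (p : G.Walk u v) (j : ℕ) (hj : j < p.length) :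
    ∃ (q : G.Walk u (p.getVert j)) (r : G.Walk (p.getVert (j + 1)) v),
      p.edges = q.edges ++ s(p.getVert j, p.getVert (j + 1)) :: r.edges := by
  induction p generalizing j with
  | nil => simp at hj
  | @cons a c d h p ih =>
    cases j with
    | zero =>
      exact ⟨.nil, p.copy (p.getVert_zero).symm rfl, by
        simp [Walk.getVert_cons_succ, Walk.edges_copy, Walk.getVert_zero]; rfl⟩
    | succ j =>
      obtain ⟨q, r, hqr⟩ := ih j (by simpa using hj)
      exact ⟨.cons h q, r, by simp [Walk.getVert_cons_succ, hqr]⟩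

lemma tree_walk_lower {T : SimpleGraph V} (hw0 : ∀ a b, T.Adj a b → 0 ≤ w a b) {a b : V}
    (hab : T.Adj a b)
    (hsep : ¬ (T.deleteEdges {s(a, b)}).Reachable a b) {x u : V}
    (hx : (T.deleteEdges {s(a, b)}).Reachable b x) (W : T.Walk u x) :
    ((T.deleteEdges {s(a, b)}).Reachable b u →
      wdist (T.deleteEdges {s(a, b)}) w u x ≤ walkWeight T w W) ∧
    ((T.deleteEdges {s(a, b)}).Reachable a u →
      wdist (T.deleteEdges {s(a, b)}) w u a + w a b + wdist (T.deleteEdges {s(a, b)}) w b x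
        ≤ walkWeight T w W) := by
  set E := T.deleteEdges {s(a, b)} with hE
  have hw0E : ∀ a b, E.Adj a b → 0 ≤ w a b := fun a b h => hw0 a b (deleteEdges_adj.1 h).1
  have hwab : 0 ≤ w a b := hw0 a b hab
  induction W with
  | nil =>
    constructor
    · intro _
      rw [walkWeight_nil]
      exact wdist_self_nonpos hw0E
    · intro hax
      exact absurd (hax.trans hx.symm) hsep
  | @cons u c d h W ih =>
    rw [walkWeight_cons]
    by_cases hcr : s(u, c) = s(a, b)
    · rw [Sym2.eq_iff] at hcr
      constructor
      · intro hbu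
        rcases hcr with ⟨hu, hc⟩ | ⟨hu, hc⟩
        · rw [hu] at hbu
          exact absurd hbu.symm hsep
        · have h2 := (ih hx).2 (by rw [hc] : E.Reachable a c)
          have h3 : 0 ≤ wdist E w c a := wdist_nonneg hw0E
          have h4 : 0 ≤ w u c := hw0 u c h
          rw [hu] at h4 ⊢
          linarith
      · intro hau
        rcases hcr with ⟨hu, hc⟩ | ⟨hu, hc⟩
        · have h2 := (ih hx).1 (by rw [hc] : E.Reachable b c)
          have h3 : wdist E w u a ≤ 0 := by rw [hu]; exact wdist_self_nonpos hw0E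
          have h2' : wdist E w b d ≤ walkWeight T w W := by rw [← hc]; exact h2
          have e1 : w u c = w a b := by rw [hu, hc]
          linarith
        · rw [hu] at hau
          exact absurd hau hsep
    · have hadj' : E.Adj u c := deleteEdges_adj.2 ⟨h, by simpa using hcr⟩
      constructor
      · intro hbu
        have hbc : E.Reachable b c := hbu.trans hadj'.reachable
        have h2 := (ih hx).1 hbc
        have tri := wdist_le_edge_add (w := w) hw0E hadj' (hbc.symm.trans hx)
        linarith
      · intro hau
        have hac : E.Reachable a c := hau.trans hadj'.reachable
        have h2 := (ih hx).2 hac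
        have tri := wdist_le_edge_add (w := w) hw0E hadj' hac.symm
        linarith

lemma key_ineq {T : SimpleGraph V} (hconn : G.Connected)
    (hw0 : ∀ a b, G.Adj a b → 0 ≤ w a b) (hws : ∀ a b, w a b = w b a)
    (hTG : T ≤ G) (hT : T.IsTree) {s a b x : V}
    (hSPT : ∀ v, wdist T w s v = wdist G w s v)
    (hab : T.Adj a b)
    (hsep : ¬ (T.deleteEdges {s(a, b)}).Reachable a b)
    (hsa : (T.deleteEdges {s(a, b)}).Reachable a s)
    (hx : (T.deleteEdges {s(a, b)}).Reachable b x) :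
    w a b + wdist (T.deleteEdges {s(a, b)}) w b x ≤ wdist G w a x := by
  set E := T.deleteEdges {s(a, b)} with hE
  have hET : E ≤ T := deleteEdges_le _
  have hEG : E ≤ G := le_trans hET hTG
  have hw0T : ∀ a b, T.Adj a b → 0 ≤ w a b := fun a b h => hw0 a b (hTG h)
  have step1 : wdist E w s a + w a b + wdist E w b x ≤ wdist T w s x := by
    refine le_csInf ⟨_, (hT.isConnected s x).some, rfl⟩ ?_
    rintro r ⟨W, rfl⟩
    exact (tree_walk_lower hw0T hab hsep hx W).2 hsa
  have step2 : wdist G w s a ≤ wdist E w s a := wdist_mono hw0 hEG ⟨hsa.symm.some⟩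
  have step3 : wdist T w s x = wdist G w s x := hSPT x
  have step4 : wdist G w s x ≤ wdist G w s a + wdist G w a x :=
    wdist_triangle hw0 ⟨(hconn s a).some⟩ ⟨(hconn a x).some⟩
  linarith

lemma reroute {T : SimpleGraph V} (hconn : G.Connected)
    (hw0 : ∀ a b, G.Adj a b → 0 ≤ w a b) (hws : ∀ a b, w a b = w b a)
    (hTG : T ≤ G) (hT : T.IsTree) {s a b y t : V}
    (hSPT : ∀ v, wdist T w s v = wdist G w s v)
    (hab : T.Adj a b)
    (hsep : ¬ (T.deleteEdges {s(a, b)}).Reachable a b)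
    (hsa : (T.deleteEdges {s(a, b)}).Reachable a s)
    (hy : (T.deleteEdges {s(a, b)}).Reachable b y)
    (hbt : (T.deleteEdges {s(a, b)}).Reachable b t)
    {x : V} (q : G.Walk x t) :
    ∀ r : (G.deleteEdges {s(a, b)}).Walk y x,
      wdist (G.deleteEdges {s(a, b)}) w y t
        ≤ walkWeight (G.deleteEdges {s(a, b)}) w r + walkWeight G w q := by
  have hTE : T.deleteEdges {s(a, b)} ≤ G.deleteEdges {s(a, b)} := by
    intro u v hadj
    rw [deleteEdges_adj] at hadj
    exact deleteEdges_adj.2 ⟨hTG hadj.1, hadj.2⟩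
  have hEGG : G.deleteEdges {s(a, b)} ≤ G := deleteEdges_le _
  have hw0E : ∀ a' b', (G.deleteEdges {s(a, b)}).Adj a' b' → 0 ≤ w a' b' :=
    fun a' b' h => hw0 a' b' (hEGG h)
  have hwab : 0 ≤ w a b := hw0 a b (hTG hab)
  induction q with
  | nil =>
    intro r
    simpa [walkWeight_nil] using wdist_le hw0E r
  | @cons x z d h q' ih =>
    intro r
    rw [walkWeight_cons]
    by_cases hcr : s(x, z) = s(a, b)
    · rw [Sym2.eq_iff] at hcr
      refine le_of_forall_pos_le_add fun ε hε => ?_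
      rcases hcr with ⟨hxa, hzb⟩ | ⟨hxb, hza⟩
      · -- x = a, z = b : replace prefix
        have h1 : wdist (G.deleteEdges {s(a, b)}) w y z ≤ wdist G w x y - w a b := by
          have m1 : wdist (G.deleteEdges {s(a, b)}) w y b
              ≤ wdist (T.deleteEdges {s(a, b)}) w y b := wdist_mono hw0E hTE ⟨hy.symm.some⟩
          have m2 : wdist (T.deleteEdges {s(a, b)}) w y b
              = wdist (T.deleteEdges {s(a, b)}) w b y := wdist_symm hws
          have m3 := key_ineq hconn hw0 hws hTG hT hSPT hab hsep hsa hy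
          have m4 : wdist G w a y = wdist G w y a := wdist_symm hws
          have m5 : wdist G w x y = wdist G w y a := by rw [hxa, ← m4]
          have m6 : wdist (G.deleteEdges {s(a, b)}) w y z
              = wdist (G.deleteEdges {s(a, b)}) w y b := by rw [hzb]
          linarith
        have h2 : wdist G w x y ≤ walkWeight (G.deleteEdges {s(a, b)}) w r := by
          obtain ⟨r'', hr'', -⟩ := walk_transfer (H := G) r
            (fun e he => SimpleGraph.edgeSet_mono hEGG (r.edges_subset_edgeSet he))
          have h5 := wdist_le hw0 r''.reverse
          rw [walkWeight_reverse hws, hr''] at h5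
          have m4 : wdist G w x y = wdist G w y x := wdist_symm hws
          linarith
        have hne : Nonempty ((G.deleteEdges {s(a, b)}).Walk y z) := by
          rw [hzb]; exact ⟨((hy.symm).mono hTE).some⟩
        obtain ⟨r', hr'⟩ := exists_walk_lt (w := w) hne hε
        have h3 := ih hbt r'
        have e1 : w x z = w a b := by rw [hxa, hzb]
        linarith
      · -- x = b, z = a : replace suffix
        have h1 : wdist (G.deleteEdges {s(a, b)}) w x d ≤ wdist G w z d - w a b := by
          have m1 : wdist (G.deleteEdges {s(a, b)}) w b d
              ≤ wdist (T.deleteEdges {s(a, b)}) w b d := wdist_mono hw0E hTE ⟨hbt.some⟩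
          have m3 := key_ineq hconn hw0 hws hTG hT hSPT hab hsep hsa hbt
          have m5 : wdist G w z d = wdist G w a d := by rw [hza]
          have m6 : wdist (G.deleteEdges {s(a, b)}) w x d
              = wdist (G.deleteEdges {s(a, b)}) w b d := by rw [hxb]
          linarith
        have h2 : wdist G w z d ≤ walkWeight G w q' := wdist_le hw0 q'
        have hne : Nonempty ((G.deleteEdges {s(a, b)}).Walk x d) := by
          rw [hxb]; exact ⟨(hbt.mono hTE).some⟩
        obtain ⟨u', hu'⟩ := exists_walk_lt (w := w) hne hε
        have h3 := wdist_le hw0E (r.append u')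
        rw [walkWeight_append] at h3
        have h4 : 0 ≤ w x z := hw0 x z h
        linarith
    · have hadj' : (G.deleteEdges {s(a, b)}).Adj x z := deleteEdges_adj.2 ⟨h, by simpa using hcr⟩
      have h6 := ih hbt (r.append (.cons hadj' .nil))
      rw [walkWeight_append, walkWeight_cons, walkWeight_nil] at h6
      linarith

lemma reroute_strict {T : SimpleGraph V} (hconn : G.Connected)
    (hw0 : ∀ a b, G.Adj a b → 0 ≤ w a b) (hws : ∀ a b, w a b = w b a)
    (hTG : T ≤ G) (hT : T.IsTree) {s a b y t : V}
    (hSPT : ∀ v, wdist T w s v = wdist G w s v)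
    (hab : T.Adj a b)
    (hsep : ¬ (T.deleteEdges {s(a, b)}).Reachable a b)
    (hsa : (T.deleteEdges {s(a, b)}).Reachable a s)
    (hy : (T.deleteEdges {s(a, b)}).Reachable b y)
    (hbt : (T.deleteEdges {s(a, b)}).Reachable b t)
    {x : V} (q : G.Walk x t) :
    s(a, b) ∈ q.edges → ∀ r : (G.deleteEdges {s(a, b)}).Walk y x,
      wdist (G.deleteEdges {s(a, b)}) w y t
        ≤ walkWeight (G.deleteEdges {s(a, b)}) w r + walkWeight G w q - w a b := by
  have hTE : T.deleteEdges {s(a, b)} ≤ G.deleteEdges {s(a, b)} := by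
    intro u v hadj
    rw [deleteEdges_adj] at hadj
    exact deleteEdges_adj.2 ⟨hTG hadj.1, hadj.2⟩
  have hEGG : G.deleteEdges {s(a, b)} ≤ G := deleteEdges_le _
  have hw0E : ∀ a' b', (G.deleteEdges {s(a, b)}).Adj a' b' → 0 ≤ w a' b' :=
    fun a' b' h => hw0 a' b' (hEGG h)
  have hwab : 0 ≤ w a b := hw0 a b (hTG hab)
  induction q with
  | nil => intro hmem; simp at hmem
  | @cons x z d h q' ih =>
    intro hmem r
    rw [walkWeight_cons]
    by_cases hcr : s(x, z) = s(a, b)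
    · rw [Sym2.eq_iff] at hcr
      refine le_of_forall_pos_le_add fun ε hε => ?_
      rcases hcr with ⟨hxa, hzb⟩ | ⟨hxb, hza⟩
      · have h1 : wdist (G.deleteEdges {s(a, b)}) w y z ≤ wdist G w x y - w a b := by
          have m1 : wdist (G.deleteEdges {s(a, b)}) w y b
              ≤ wdist (T.deleteEdges {s(a, b)}) w y b := wdist_mono hw0E hTE ⟨hy.symm.some⟩
          have m2 : wdist (T.deleteEdges {s(a, b)}) w y b
              = wdist (T.deleteEdges {s(a, b)}) w b y := wdist_symm hws
          have m3 := key_ineq hconn hw0 hws hTG hT hSPT hab hsep hsa hy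
          have m4 : wdist G w a y = wdist G w y a := wdist_symm hws
          have m5 : wdist G w x y = wdist G w y a := by rw [hxa, ← m4]
          have m6 : wdist (G.deleteEdges {s(a, b)}) w y z
              = wdist (G.deleteEdges {s(a, b)}) w y b := by rw [hzb]
          linarith
        have h2 : wdist G w x y ≤ walkWeight (G.deleteEdges {s(a, b)}) w r := by
          obtain ⟨r'', hr'', -⟩ := walk_transfer (H := G) r
            (fun e he => SimpleGraph.edgeSet_mono hEGG (r.edges_subset_edgeSet he))
          have h5 := wdist_le hw0 r''.reverse
          rw [walkWeight_reverse hws, hr''] at h5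
          have m4 : wdist G w x y = wdist G w y x := wdist_symm hws
          linarith
        have hne : Nonempty ((G.deleteEdges {s(a, b)}).Walk y z) := by
          rw [hzb]; exact ⟨((hy.symm).mono hTE).some⟩
        obtain ⟨r', hr'⟩ := exists_walk_lt (w := w) hne hε
        have h3 := reroute hconn hw0 hws hTG hT hSPT hab hsep hsa hy hbt q' r'
        have e1 : w x z = w a b := by rw [hxa, hzb]
        linarith
      · have h1 : wdist (G.deleteEdges {s(a, b)}) w x d ≤ wdist G w z d - w a b := by
          have m1 : wdist (G.deleteEdges {s(a, b)}) w b d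
              ≤ wdist (T.deleteEdges {s(a, b)}) w b d := wdist_mono hw0E hTE ⟨hbt.some⟩
          have m3 := key_ineq hconn hw0 hws hTG hT hSPT hab hsep hsa hbt
          have m5 : wdist G w z d = wdist G w a d := by rw [hza]
          have m6 : wdist (G.deleteEdges {s(a, b)}) w x d
              = wdist (G.deleteEdges {s(a, b)}) w b d := by rw [hxb]
          linarith
        have h2 : wdist G w z d ≤ walkWeight G w q' := wdist_le hw0 q'
        have hne : Nonempty ((G.deleteEdges {s(a, b)}).Walk x d) := by
          rw [hxb]; exact ⟨(hbt.mono hTE).some⟩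
        obtain ⟨u', hu'⟩ := exists_walk_lt (w := w) hne hε
        have h3 := wdist_le hw0E (r.append u')
        rw [walkWeight_append] at h3
        have h4 : 0 ≤ w x z := hw0 x z h
        linarith
    · have hmem' : s(a, b) ∈ q'.edges := by
        rw [Walk.edges_cons, List.mem_cons] at hmem
        rcases hmem with h' | h'
        · exact absurd h'.symm hcr
        · exact h'
      have hadj' : (G.deleteEdges {s(a, b)}).Adj x z := deleteEdges_adj.2 ⟨h, by simpa using hcr⟩
      have h6 := ih hbt hmem' (r.append (.cons hadj' .nil))
      rw [walkWeight_append, walkWeight_cons, walkWeight_nil] at h6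
      linarith


theorem stmt2 {V : Type*}
    (G : SimpleGraph V) (hconn : G.Connected) (w : V → V → ℝ)
    (hw : ∀ a b, G.Adj a b → 0 < w a b) (hws : ∀ a b, w a b = w b a)
    (s t : V) (p : G.Walk s t) (hp : p.IsPath)
    (hps : walkWeight G w p = wdist G w s t)
    (T : SimpleGraph V) (hTG : T ≤ G) (hT : T.IsTree)
    (hSPT : ∀ v, wdist T w s v = wdist G w s v)
    (hPT : ∀ e ∈ p.edges, e ∈ T.edgeSet)
    (i : ℕ) (hi1 : 1 ≤ i) (hil : i ≤ p.length)
    (y : V)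
    (hy : (T.deleteEdges {s(p.getVert (i-1), p.getVert i)}).Reachable (p.getVert i) y) :
    (∀ q : G.Walk y t, q.IsPath → walkWeight G w q = wdist G w y t →
      s(p.getVert (i-1), p.getVert i) ∉ q.edges) ∧
    wdist (G.deleteEdges {s(p.getVert (i-1), p.getVert i)}) w y t = wdist G w y t := by
  classical
  have hw0 : ∀ a b, G.Adj a b → 0 ≤ w a b := fun a b h => (hw a b h).le
  have hii : i - 1 + 1 = i := by omega
  have hj : i - 1 < p.length := by omega
  obtain ⟨q0, r0', hsplit'⟩ := walk_decomp p (i - 1) hj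
  have hE : s(p.getVert (i-1), p.getVert (i - 1 + 1)) = s(p.getVert (i-1), p.getVert i) := by
    rw [hii]
  set r0 : G.Walk (p.getVert i) t := r0'.copy (congrArg p.getVert hii) rfl with hr0
  have hsplit : p.edges = q0.edges ++ s(p.getVert (i-1), p.getVert i) :: r0.edges := by
    rw [hr0, Walk.edges_copy, ← hE]; exact hsplit'
  have hmemp : s(p.getVert (i-1), p.getVert i) ∈ p.edges := by
    rw [hsplit]; exact List.mem_append_right _ List.mem_cons_self
  have habT : T.Adj (p.getVert (i-1)) (p.getVert i) := (T.mem_edgeSet).1 (hPT _ hmemp)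
  have hwab : 0 < w (p.getVert (i-1)) (p.getVert i) := hw _ _ (hTG habT)
  have hsep := sep_of_tree hT habT
  have hnodup : p.edges.Nodup := hp.isTrail.edges_nodup
  rw [hsplit] at hnodup
  obtain ⟨hn1, hn2, hdisj⟩ := List.nodup_append.1 hnodup
  have he_q0 : s(p.getVert (i-1), p.getVert i) ∉ q0.edges :=
    fun hmem => hdisj _ hmem _ List.mem_cons_self rfl
  have he_r0 : s(p.getVert (i-1), p.getVert i) ∉ r0.edges := (List.nodup_cons.1 hn2).1
  have hsa : (T.deleteEdges {s(p.getVert (i-1), p.getVert i)}).Reachable (p.getVert (i-1)) s := by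
    obtain ⟨q0', -, -⟩ := walk_transfer (w := w)
      (H := T.deleteEdges {s(p.getVert (i-1), p.getVert i)}) q0 (fun e he => by
        rw [edgeSet_deleteEdges]
        refine ⟨hPT e (by rw [hsplit]; exact List.mem_append_left _ he), ?_⟩
        simp only [Set.mem_singleton_iff]
        rintro rfl
        exact he_q0 he)
    exact ⟨q0'.reverse⟩
  have hbt : (T.deleteEdges {s(p.getVert (i-1), p.getVert i)}).Reachable (p.getVert i) t := by
    obtain ⟨r0', -, -⟩ := walk_transfer (w := w)
      (H := T.deleteEdges {s(p.getVert (i-1), p.getVert i)}) r0 (fun e he => by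
        rw [edgeSet_deleteEdges]
        refine ⟨hPT e (by
          rw [hsplit]; exact List.mem_append_right _ (List.mem_cons_of_mem _ he)), ?_⟩
        simp only [Set.mem_singleton_iff]
        rintro rfl
        exact he_r0 he)
    exact ⟨r0'⟩
  have hTE : T.deleteEdges {s(p.getVert (i-1), p.getVert i)}
      ≤ G.deleteEdges {s(p.getVert (i-1), p.getVert i)} := by
    intro u v hadj
    rw [deleteEdges_adj] at hadj
    exact deleteEdges_adj.2 ⟨hTG hadj.1, hadj.2⟩
  have hge : wdist G w y t ≤ wdist (G.deleteEdges {s(p.getVert (i-1), p.getVert i)}) w y t :=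
    wdist_mono hw0 (deleteEdges_le _) ⟨((hy.symm.trans hbt).mono hTE).some⟩
  constructor
  · intro q hq hwq hmem
    exfalso
    have h1 := reroute_strict hconn hw0 hws hTG hT hSPT habT hsep hsa hy hbt q hmem .nil
    rw [walkWeight_nil, zero_add, hwq] at h1
    linarith
  · apply le_antisymm
    · refine le_csInf ⟨_, (hconn y t).some, rfl⟩ ?_
      rintro r ⟨q, rfl⟩
      have h1 := reroute hconn hw0 hws hTG hT hSPT habT hsep hsa hy hbt q .nil
      rw [walkWeight_nil, zero_add] at h1
      exact h1
    · exact hge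
end
end

section
/- The replacement path distance satisfies d_{G \ e_i}(s, t) = min over (x', y') ∈ C(e_i) of (d_G(s, x') + w(x', y') + d_G(y', t)), provided C(e_i) is nonempty. -/
open Classical SimpleGraph

noncomputable section

variable {V : Type*}

namespace RPaux

open SimpleGraph Walk

variable {G T H : SimpleGraph V} {w : V → V → ℝ}

lemma walkWeight_nil {a : V} : walkWeight G w (Walk.nil : G.Walk a a) = 0 := by
  simp [walkWeight]

lemma walkWeight_cons {a b c : V} (h : G.Adj a b) (p : G.Walk b c) :
    walkWeight G w (Walk.cons h p) = w a b + walkWeight G w p := by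
  simp [walkWeight, Walk.darts_cons]

lemma walkWeight_append {a b c : V} (p : G.Walk a b) (q : G.Walk b c) :
    walkWeight G w (p.append q) = walkWeight G w p + walkWeight G w q := by
  simp [walkWeight, Walk.darts_append]

lemma walkWeight_reverse (hws : ∀ a b, w a b = w b a) {a b : V} (p : G.Walk a b) :
    walkWeight G w p.reverse = walkWeight G w p := by
  rw [walkWeight, Walk.darts_reverse, List.map_reverse, List.sum_reverse, List.map_map,
    walkWeight]
  congr 1
  apply List.map_congr_left
  intro d _
  exact (hws d.snd d.fst).symm ▸ rfl

lemma walkWeight_transfer {a b : V} (p : G.Walk a b) (H : SimpleGraph V)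
    (h : ∀ e ∈ p.edges, e ∈ H.edgeSet) :
    walkWeight H w (p.transfer H h) = walkWeight G w p := by
  induction p with
  | nil => rfl
  | cons h' q ih => rw [walkWeight_cons]; exact (walkWeight_cons _ _).trans (by rw [ih])

lemma walkWeight_nonneg (hw : ∀ a b, G.Adj a b → 0 ≤ w a b) {a b : V} (p : G.Walk a b) :
    0 ≤ walkWeight G w p := by
  apply List.sum_nonneg
  intro x hx
  simp only [List.mem_map] at hx
  obtain ⟨d, _, rfl⟩ := hx
  exact hw _ _ d.adj

lemma wdist_le (hw : ∀ a b, G.Adj a b → 0 ≤ w a b) {a b : V} (p : G.Walk a b) :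
    wdist G w a b ≤ walkWeight G w p :=
  csInf_le ⟨0, fun r hr => by obtain ⟨q, rfl⟩ := hr; exact walkWeight_nonneg hw q⟩ ⟨p, rfl⟩

lemma wdist_nonneg (hw : ∀ a b, G.Adj a b → 0 ≤ w a b) (a b : V) :
    0 ≤ wdist G w a b :=
  Real.sInf_nonneg (fun r hr => by obtain ⟨q, rfl⟩ := hr; exact walkWeight_nonneg hw q)

lemma walkWeight_bypass_le (hw : ∀ a b, G.Adj a b → 0 ≤ w a b) {a b : V} (p : G.Walk a b) :
    walkWeight G w p.bypass ≤ walkWeight G w p := by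
  have hnd : p.bypass.darts.Nodup := by
    have h1 := Walk.edges_nodup_of_support_nodup p.bypass_isPath.support_nodup
    exact List.Nodup.of_map _ h1
  obtain ⟨l, hperm, hsub⟩ := hnd.subperm p.darts_bypass_subset
  have h1 : walkWeight G w p.bypass = (l.map fun d => w d.fst d.snd).sum :=
    ((hperm.map _).sum_eq).symm
  rw [h1]
  exact List.Sublist.sum_le_sum (hsub.map _)
    (fun x hx => by
      simp only [List.mem_map] at hx
      obtain ⟨d, _, rfl⟩ := hx
      exact hw _ _ d.adj)

lemma tree_path_le (hT : T.IsAcyclic) (hw : ∀ a b, T.Adj a b → 0 ≤ w a b) {a b : V}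
    {P : T.Walk a b} (hP : P.IsPath) (W : T.Walk a b) :
    walkWeight T w P ≤ walkWeight T w W := by
  have h1 : (⟨P, hP⟩ : T.Path a b) = ⟨W.bypass, W.bypass_isPath⟩ := hT.path_unique _ _
  have h2 : P = W.bypass := congrArg Subtype.val h1
  rw [h2]
  exact walkWeight_bypass_le hw W

lemma tree_path_wdist (hT : T.IsAcyclic) (hw : ∀ a b, T.Adj a b → 0 ≤ w a b) {a b : V}
    {P : T.Walk a b} (hP : P.IsPath) :
    walkWeight T w P = wdist T w a b := by
  refine le_antisymm (le_csInf ⟨_, P, rfl⟩ ?_) (wdist_le hw P)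
  rintro r ⟨W, rfl⟩
  exact tree_path_le hT hw hP W

lemma reach_of_mem_support {a b z : V} (W : G.Walk a b) (hz : z ∈ W.support) :
    G.Reachable a z := ⟨W.takeUntil z hz⟩

lemma not_reach_deleteEdge (hT : T.IsAcyclic) {u v : V} (huv : T.Adj u v) :
    ¬ (T.deleteEdges {s(u,v)}).Reachable u v := by
  rintro ⟨W⟩
  have hedges : ∀ e ∈ W.bypass.edges, e ∈ T.edgeSet := fun e he => by
    have h1 := W.bypass.edges_subset_edgeSet he
    rw [edgeSet_deleteEdges] at h1
    exact h1.1
  have hP' : (W.bypass.transfer T hedges).IsPath := W.bypass_isPath.transfer _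
  have hsingle : (Walk.cons huv Walk.nil).IsPath := by
    simp [Walk.isPath_def, huv.ne]
  have h2 : (⟨W.bypass.transfer T hedges, hP'⟩ : T.Path u v) = ⟨Walk.cons huv Walk.nil, hsingle⟩ :=
    hT.path_unique _ _
  have hEq : W.bypass.transfer T hedges = Walk.cons huv Walk.nil := congrArg Subtype.val h2
  have h3 : s(u,v) ∈ (W.bypass.transfer T hedges).edges := by rw [hEq]; simp
  rw [Walk.edges_transfer] at h3
  have h4 := W.bypass.edges_subset_edgeSet h3
  rw [edgeSet_deleteEdges] at h4
  exact h4.2 rfl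

lemma cover_aux {u v s : V} (hsu : (T.deleteEdges {s(u,v)}).Reachable s u) :
    ∀ {a z : V} (_ : T.Walk a z),
      ((T.deleteEdges {s(u,v)}).Reachable s a ∨ (T.deleteEdges {s(u,v)}).Reachable v a) →
      ((T.deleteEdges {s(u,v)}).Reachable s z ∨ (T.deleteEdges {s(u,v)}).Reachable v z) := by
  intro a z W
  induction W with
  | nil => exact id
  | @cons a c z h W ih =>
    intro ha
    apply ih
    by_cases hE : s(a, c) = s(u, v)
    · rw [Sym2.eq_iff] at hE
      rcases hE with ⟨rfl, rfl⟩ | ⟨rfl, rfl⟩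
      · exact Or.inr (Reachable.refl _)
      · exact Or.inl hsu
    · have hadj : (T.deleteEdges {s(u,v)}).Adj a c := by
        rw [SimpleGraph.deleteEdges_adj]
        exact ⟨h, by simpa using hE⟩
      exact ha.imp (fun hr => hr.trans ⟨hadj.toWalk⟩) (fun hr => hr.trans ⟨hadj.toWalk⟩)

lemma first_split (w : V → V → ℝ) (u v : V) :
    ∀ {a b : V} (W : G.Walk a b), (u ∈ W.support ∨ v ∈ W.support) →
    ∃ (z : V) (W1 : G.Walk a z) (W2 : G.Walk z b), (u = z ∨ v = z) ∧ s(u,v) ∉ W1.edges ∧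
      walkWeight G w W1 + walkWeight G w W2 = walkWeight G w W := by
  intro a b W
  induction W with
  | @nil a =>
    intro ha
    simp only [Walk.support_nil, List.mem_singleton] at ha
    refine ⟨a, Walk.nil, Walk.nil, ?_, by simp, by simp [walkWeight_nil]⟩
    rcases ha with rfl | rfl
    · exact Or.inl rfl
    · exact Or.inr rfl
  | @cons a c b h W ih =>
    intro ha
    by_cases hac : a = u ∨ a = v
    · exact ⟨a, Walk.nil, Walk.cons h W, hac.imp Eq.symm Eq.symm, by simp, by simp [walkWeight_nil]⟩
    · push_neg at hac
      have ha' : u ∈ W.support ∨ v ∈ W.support := by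
        rcases ha with h1 | h1
        · rw [Walk.support_cons, List.mem_cons] at h1
          rcases h1 with h1 | h1
          · exact absurd h1.symm hac.1
          · exact Or.inl h1
        · rw [Walk.support_cons, List.mem_cons] at h1
          rcases h1 with h1 | h1
          · exact absurd h1.symm hac.2
          · exact Or.inr h1
      obtain ⟨z, W1, W2, hz, hfree, hsum⟩ := ih ha'
      refine ⟨z, Walk.cons h W1, W2, hz, ?_, ?_⟩
      · simp only [Walk.edges_cons, List.mem_cons, not_or]
        refine ⟨?_, hfree⟩
        intro hE
        rw [Sym2.eq_iff] at hE
        rcases hE with ⟨h1, _⟩ | ⟨_, h2⟩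
        · exact hac.1 h1.symm
        · exact hac.2 h2.symm
      · rw [walkWeight_cons, walkWeight_cons]
        linarith [hsum]

lemma cross (w : V → V → ℝ) (P1 P2 : V → Prop) (hcov : ∀ z, P1 z ∨ P2 z)
    (hdisj : ∀ z, P1 z → P2 z → False) (e : Sym2 V) :
    ∀ {a b : V} (W : G.Walk a b), e ∉ W.edges → P1 a → P2 b →
    ∃ (x y : V) (hxy : G.Adj x y) (W1 : G.Walk a x) (W2 : G.Walk y b),
      P1 x ∧ P2 y ∧ s(x,y) ≠ e ∧
      walkWeight G w W = walkWeight G w W1 + w x y + walkWeight G w W2 := by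
  intro a b W
  induction W with
  | @nil a => intro _ h1 h2; exact absurd h2 (fun h2 => hdisj a h1 h2)
  | @cons a c b h W ih =>
    intro he h1 h2
    simp only [Walk.edges_cons, List.mem_cons, not_or] at he
    rcases hcov c with hc | hc
    · obtain ⟨x, y, hxy, W1, W2, hx, hy, hne, hwt⟩ := ih he.2 hc h2
      refine ⟨x, y, hxy, Walk.cons h W1, W2, hx, hy, hne, ?_⟩
      rw [walkWeight_cons, walkWeight_cons, hwt]
      ring
    · refine ⟨a, c, h, Walk.nil, W, h1, hc, Ne.symm he.1, ?_⟩
      rw [walkWeight_cons, walkWeight_nil]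
      ring

lemma split_at : ∀ {a b : V} (p : G.Walk a b) (i : ℕ), i < p.length →
    ∃ (u' v' : V) (h : G.Adj u' v') (p1 : G.Walk a u') (p2 : G.Walk v' b),
      u' = p.getVert i ∧ v' = p.getVert (i+1) ∧ p = p1.append (Walk.cons h p2) := by
  intro a b p
  induction p with
  | nil => intro i hi; simp at hi
  | @cons a c b h q ih =>
    intro i hi
    match i with
    | 0 =>
      exact ⟨a, c, h, Walk.nil, q, by simp, by simp [Walk.getVert_cons_succ], by simp⟩
    | (j+1) =>
      have hj : j < q.length := by simpa [Walk.length_cons] using hi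
      obtain ⟨u', v', h', p1, p2, hu, hv, heq⟩ := ih j hj
      exact ⟨u', v', h', Walk.cons h p1, p2, by simpa [Walk.getVert_cons_succ] using hu,
        by simpa [Walk.getVert_cons_succ] using hv, by simp [heq]⟩

lemma le_of_eps {a b : ℝ} (h : ∀ ε : ℝ, 0 < ε → a ≤ b + ε) : a ≤ b := by
  by_contra hc
  push_neg at hc
  linarith [h ((a-b)/2) (by linarith)]

end RPaux

theorem stmt5 {V : Type*}
    (G : SimpleGraph V) (hconn : G.Connected) (w : V → V → ℝ)
    (hw : ∀ a b, G.Adj a b → 0 < w a b) (hws : ∀ a b, w a b = w b a)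
    (s t : V) (p : G.Walk s t) (hp : p.IsPath)
    (hps : walkWeight G w p = wdist G w s t)
    (T : SimpleGraph V) (hTG : T ≤ G) (hT : T.IsTree)
    (hSPT : ∀ v, wdist T w s v = wdist G w s v)
    (hPT : ∀ e ∈ p.edges, e ∈ T.edgeSet)
    (i : ℕ) (hi1 : 1 ≤ i) (hil : i ≤ p.length)
    (hne : ∃ x y, G.Adj x y ∧ s(x, y) ≠ s(p.getVert (i-1), p.getVert i) ∧
      (T.deleteEdges {s(p.getVert (i-1), p.getVert i)}).Reachable s x ∧
      (T.deleteEdges {s(p.getVert (i-1), p.getVert i)}).Reachable (p.getVert i) y) :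
    wdist (G.deleteEdges {s(p.getVert (i-1), p.getVert i)}) w s t =
      sInf {r | ∃ x y, G.Adj x y ∧ s(x, y) ≠ s(p.getVert (i-1), p.getVert i) ∧
        (T.deleteEdges {s(p.getVert (i-1), p.getVert i)}).Reachable s x ∧
        (T.deleteEdges {s(p.getVert (i-1), p.getVert i)}).Reachable (p.getVert i) y ∧
        r = wdist G w s x + w x y + wdist G w y t} := by
  classical
  have hwnn : ∀ a b, G.Adj a b → 0 ≤ w a b := fun a b h => (hw a b h).le
  have hwT : ∀ a b, T.Adj a b → 0 ≤ w a b := fun a b h => (hw a b (hTG h)).le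
  have hw' : ∀ a b, (G.deleteEdges {s(p.getVert (i-1), p.getVert i)}).Adj a b → 0 ≤ w a b :=
    fun a b h => (hw a b ((SimpleGraph.deleteEdges_adj).1 h).1).le
  -- split the path p at index i-1
  have hilt : i - 1 < p.length := by omega
  obtain ⟨u', v', huv, p1, p2, hu', hv', hpeq⟩ := RPaux.split_at p (i-1) hilt
  have hv1 : i - 1 + 1 = i := by omega
  rw [hv1] at hv'
  rw [← hu', ← hv'] at hne hw' ⊢
  have hedges : p.edges = p1.edges ++ s(u', v') :: p2.edges := by
    rw [hpeq]; simp [Walk.edges_append, Walk.edges_cons]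
  have hpe : s(u', v') ∈ p.edges := by rw [hedges]; simp
  have hnodup : (p1.edges ++ s(u', v') :: p2.edges).Nodup := by
    rw [← hedges]; exact hp.isTrail.edges_nodup
  have he1 : s(u', v') ∉ p1.edges :=
    fun hE1 => (List.disjoint_of_nodup_append hnodup) hE1 (by simp)
  have he2 : s(u', v') ∉ p2.edges := by
    have h0 := (List.nodup_append.1 hnodup).2.1
    rw [List.nodup_cons] at h0
    exact h0.1
  have hsub1 : ∀ e ∈ p1.edges, e ∈ T.edgeSet := fun e he => hPT e (by rw [hedges]; simp [he])
  have hsub2 : ∀ e ∈ p2.edges, e ∈ T.edgeSet := fun e he => hPT e (by rw [hedges]; simp [he])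
  have hTadj : T.Adj (u') (v') := (T.mem_edgeSet).1 (hPT _ hpe)
  have hwp : walkWeight G w p
      = walkWeight G w p1 + w (u') (v') + walkWeight G w p2 := by
    rw [hpeq, RPaux.walkWeight_append, RPaux.walkWeight_cons]; ring
  -- the two sides of the cut
  have hmem1 : ∀ e ∈ (p1.transfer T hsub1).edges, e ∉ ({s(u', v')} : Set (Sym2 V)) := by
    rw [Walk.edges_transfer]
    intro e he hmem
    rw [Set.mem_singleton_iff] at hmem
    exact he1 (hmem ▸ he)
  have hmem2 : ∀ e ∈ (p2.transfer T hsub2).edges, e ∉ ({s(u', v')} : Set (Sym2 V)) := by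
    rw [Walk.edges_transfer]
    intro e he hmem
    rw [Set.mem_singleton_iff] at hmem
    exact he2 (hmem ▸ he)
  have hsu : (T.deleteEdges {s(u', v')}).Reachable s (u') :=
    ⟨(p1.transfer T hsub1).toDeleteEdges _ hmem1⟩
  have hvt : (T.deleteEdges {s(u', v')}).Reachable (v') t :=
    ⟨(p2.transfer T hsub2).toDeleteEdges _ hmem2⟩
  have hdisjUV : ¬ (T.deleteEdges {s(u', v')}).Reachable (u') (v') :=
    RPaux.not_reach_deleteEdge hT.IsAcyclic hTadj
  have hdisj : ∀ z, (T.deleteEdges {s(u', v')}).Reachable s z →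
      (T.deleteEdges {s(u', v')}).Reachable (v') z → False :=
    fun z h1 h2 => hdisjUV (hsu.symm.trans (h1.trans h2.symm))
  have hcov : ∀ z, (T.deleteEdges {s(u', v')}).Reachable s z ∨
      (T.deleteEdges {s(u', v')}).Reachable (v') z :=
    fun z => (hT.isConnected.preconnected s z).elim
      fun W => RPaux.cover_aux hsu W (Or.inl (Reachable.refl s))
  -- key tool: every edge-avoiding G-walk bounds the deleted distance
  have key : ∀ (F : G.Walk s t),
      (∀ e' ∈ F.edges, e' ∉ ({s(u', v')} : Set (Sym2 V))) →
      wdist (G.deleteEdges {s(u', v')}) w s t ≤ walkWeight G w F := by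
    intro F hF
    have h1 := RPaux.wdist_le hw' (F.toDeleteEdges _ hF)
    rwa [RPaux.walkWeight_transfer] at h1
  refine le_antisymm ?g1 ?g2
  · -- wdist (G \ e) ≤ sInf S_R
    obtain ⟨x0, y0, hadj0, hne0, hx0, hy0⟩ := hne
    refine le_csInf ⟨_, x0, y0, hadj0, hne0, hx0, hy0, rfl⟩ ?_
    rintro r ⟨x, y, hxy, hnexy, hx, hy, rfl⟩
    refine RPaux.le_of_eps fun ε hε => ?_
    -- an almost-shortest walk from y to t in G
    have hytne : {r' | ∃ q : G.Walk y t, walkWeight G w q = r'}.Nonempty :=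
      (hconn.preconnected y t).elim fun W => ⟨_, W, rfl⟩
    obtain ⟨rq, hrq, hQlt⟩ := Real.lt_sInf_add_pos hytne hε
    obtain ⟨Q, rfl⟩ := hrq
    have hQlt' : walkWeight G w Q < wdist G w y t + ε := hQlt
    -- the tree path from s to x, avoiding e
    obtain ⟨Wsx⟩ := hx
    have hbE : ∀ e ∈ Wsx.bypass.edges, e ∈ T.edgeSet := fun e he => by
      have h1 := Wsx.bypass.edges_subset_edgeSet he
      rw [edgeSet_deleteEdges] at h1
      exact h1.1
    have hbEG : ∀ e ∈ Wsx.bypass.edges, e ∈ G.edgeSet :=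
      fun e he => edgeSet_mono hTG (hbE e he)
    have hPXpath : (Wsx.bypass.transfer T hbE).IsPath := Wsx.bypass_isPath.transfer _
    have hPXw : walkWeight T w (Wsx.bypass.transfer T hbE) = wdist G w s x := by
      rw [RPaux.tree_path_wdist hT.IsAcyclic hwT hPXpath]; exact hSPT x
    have hPXfree : ∀ e ∈ Wsx.bypass.edges, e ≠ s(u', v') := by
      intro e he heq
      have h1 := Wsx.bypass.edges_subset_edgeSet he
      rw [edgeSet_deleteEdges] at h1
      exact h1.2 (Set.mem_singleton_iff.2 heq)
    have hPXwG : walkWeight G w (Wsx.bypass.transfer G hbEG) = wdist G w s x := by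
      rw [RPaux.walkWeight_transfer, ← RPaux.walkWeight_transfer Wsx.bypass T hbE]
      exact hPXw
    -- the tree path from (v') to y, avoiding e
    obtain ⟨Wvy⟩ := hy
    have hRE : ∀ e ∈ Wvy.bypass.edges, e ∈ T.edgeSet := fun e he => by
      have h1 := Wvy.bypass.edges_subset_edgeSet he
      rw [edgeSet_deleteEdges] at h1
      exact h1.1
    have hREG : ∀ e ∈ Wvy.bypass.edges, e ∈ G.edgeSet :=
      fun e he => edgeSet_mono hTG (hRE e he)
    have hRfree : ∀ e ∈ Wvy.bypass.edges, e ≠ s(u', v') := by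
      intro e he heq
      have h1 := Wvy.bypass.edges_subset_edgeSet he
      rw [edgeSet_deleteEdges] at h1
      exact h1.2 (Set.mem_singleton_iff.2 heq)
    have hRG : walkWeight G w (Wvy.bypass.transfer G hREG)
        = walkWeight T w (Wvy.bypass.transfer T hRE) := by
      rw [RPaux.walkWeight_transfer, RPaux.walkWeight_transfer]
    by_cases hQe : s(u', v') ∈ Q.edges
    · -- Q uses the deleted edge; split at the first visit to {u,v}
      have hUsup : u' ∈ Q.support := Q.fst_mem_support_of_mem_edges hQe
      obtain ⟨z, Q1, Q2, hz, hQ1free, hQsum⟩ :=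
        RPaux.first_split w (u') (v') Q (Or.inl hUsup)
      rcases hz with rfl | rfl
      · -- first visit is to u = u'
        -- (a)  w u v + weight p2 ≤ weight Q2
        have ha : w (u') (v') + walkWeight G w p2 ≤ walkWeight G w Q2 := by
          have h1 := RPaux.wdist_le hwnn (p1.append Q2)
          rw [RPaux.walkWeight_append, ← hps, hwp] at h1
          linarith
        -- (b)  the tree path from s to y decomposes through the edge e
        have hp1path : p1.IsPath := by
          have hp' : (p1.append (Walk.cons huv p2)).IsPath := hpeq ▸ hp
          exact hp'.of_append_left
        have hsupp1 : ∀ z ∈ (p1.transfer T hsub1).support,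
            (T.deleteEdges {s(u', v')}).Reachable s z := by
          intro z hz
          refine RPaux.reach_of_mem_support ((p1.transfer T hsub1).toDeleteEdges _ hmem1) ?_
          rwa [Walk.support_transfer]
        have hsupp2 : ∀ z ∈ (Wvy.bypass.transfer T hRE).support,
            (T.deleteEdges {s(u', v')}).Reachable (v') z := by
          intro z hz
          rw [Walk.support_transfer] at hz
          exact RPaux.reach_of_mem_support Wvy (Wvy.support_bypass_subset hz)
        have hPstar : ((p1.transfer T hsub1).append
            (Walk.cons hTadj (Wvy.bypass.transfer T hRE))).IsPath := by
          rw [Walk.isPath_def, Walk.support_append, Walk.support_cons]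
          simp only [List.tail_cons]
          refine List.Nodup.append (hp1path.transfer _).support_nodup
            (Wvy.bypass_isPath.transfer _).support_nodup ?_
          intro a ha1 ha2
          exact hdisj a (hsupp1 a ha1) (hsupp2 a ha2)
        have hb : walkWeight G w p1 + w (u') (v')
            + walkWeight T w (Wvy.bypass.transfer T hRE) = wdist G w s y := by
          have h0 := RPaux.tree_path_wdist hT.IsAcyclic hwT hPstar
          rw [RPaux.walkWeight_append, RPaux.walkWeight_cons, RPaux.walkWeight_transfer p1] at h0
          rw [← hSPT y, ← h0]
          ring
        -- (c)  weight of the tree path from v to y is small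
        have hc : walkWeight T w (Wvy.bypass.transfer T hRE)
            ≤ walkWeight G w Q1 - w (u') (v') := by
          have h1 := RPaux.wdist_le hwnn (p1.append Q1.reverse)
          rw [RPaux.walkWeight_append, RPaux.walkWeight_reverse hws] at h1
          linarith [hb ▸ h1]
        -- final walk
        have hF : ∀ e' ∈ ((Wsx.bypass.transfer G hbEG).append (Walk.cons hxy
            (((Wvy.bypass.transfer G hREG).reverse).append p2))).edges,
            e' ∉ ({s(u', v')} : Set (Sym2 V)) := by
          intro e' he' hmem
          rw [Set.mem_singleton_iff] at hmem
          subst hmem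
          rw [Walk.edges_append, Walk.edges_cons, Walk.edges_append, Walk.edges_reverse,
            Walk.edges_transfer, Walk.edges_transfer] at he'
          simp only [List.mem_append, List.mem_cons, List.mem_reverse] at he'
          rcases he' with h1 | h1 | h1 | h1
          · exact hPXfree _ h1 rfl
          · exact hnexy h1.symm
          · exact hRfree _ h1 rfl
          · exact he2 h1
        have hkey := key _ hF
        rw [RPaux.walkWeight_append, RPaux.walkWeight_cons, RPaux.walkWeight_append,
          RPaux.walkWeight_reverse hws, hPXwG, hRG] at hkey
        have hwuv := hw _ _ huv
        linarith
      · -- first visit is to v = v'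
        have ha : walkWeight G w p2 ≤ walkWeight G w Q2 := by
          have h1 := RPaux.wdist_le hwnn (p1.append (Walk.cons huv Q2))
          rw [RPaux.walkWeight_append, RPaux.walkWeight_cons, ← hps, hwp] at h1
          linarith
        have hF : ∀ e' ∈ ((Wsx.bypass.transfer G hbEG).append (Walk.cons hxy
            (Q1.append p2))).edges,
            e' ∉ ({s(u', v')} : Set (Sym2 V)) := by
          intro e' he' hmem
          rw [Set.mem_singleton_iff] at hmem
          subst hmem
          rw [Walk.edges_append, Walk.edges_cons, Walk.edges_append,
            Walk.edges_transfer] at he'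
          simp only [List.mem_append, List.mem_cons] at he'
          rcases he' with h1 | h1 | h1 | h1
          · exact hPXfree _ h1 rfl
          · exact hnexy h1.symm
          · exact hQ1free h1
          · exact he2 h1
        have hkey := key _ hF
        rw [RPaux.walkWeight_append, RPaux.walkWeight_cons, RPaux.walkWeight_append,
          hPXwG] at hkey
        linarith
    · -- Q avoids the deleted edge
      have hF : ∀ e' ∈ ((Wsx.bypass.transfer G hbEG).append (Walk.cons hxy Q)).edges,
          e' ∉ ({s(u', v')} : Set (Sym2 V)) := by
        intro e' he' hmem
        rw [Set.mem_singleton_iff] at hmem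
        subst hmem
        rw [Walk.edges_append, Walk.edges_cons, Walk.edges_transfer] at he'
        simp only [List.mem_append, List.mem_cons] at he'
        rcases he' with h1 | h1 | h1
        · exact hPXfree _ h1 rfl
        · exact hnexy h1.symm
        · exact hQe h1
      have hkey := key _ hF
      rw [RPaux.walkWeight_append, RPaux.walkWeight_cons, hPXwG] at hkey
      linarith
  · -- sInf S_R ≤ wdist (G \ e)
    have hSLne : {r | ∃ q : (G.deleteEdges {s(u', v')}).Walk s t,
        walkWeight _ w q = r}.Nonempty := by
      obtain ⟨x0, y0, hadj0, hne0, hx0, hy0⟩ := hne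
      obtain ⟨W1⟩ := hx0
      obtain ⟨W2⟩ := hy0
      have hW1 : ∀ e ∈ W1.edges, e ∈ (G.deleteEdges {s(u', v')}).edgeSet := by
        intro e he
        have h1 := W1.edges_subset_edgeSet he
        rw [edgeSet_deleteEdges] at h1 ⊢
        exact ⟨edgeSet_mono hTG h1.1, h1.2⟩
      have hW2 : ∀ e ∈ W2.edges, e ∈ (G.deleteEdges {s(u', v')}).edgeSet := by
        intro e he
        have h1 := W2.edges_subset_edgeSet he
        rw [edgeSet_deleteEdges] at h1 ⊢
        exact ⟨edgeSet_mono hTG h1.1, h1.2⟩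
      have hadj0' : (G.deleteEdges {s(u', v')}).Adj x0 y0 := by
        rw [SimpleGraph.deleteEdges_adj]
        exact ⟨hadj0, by simpa using hne0⟩
      have hp2' : ∀ e ∈ p2.edges, e ∈ (G.deleteEdges {s(u', v')}).edgeSet := by
        intro e he
        rw [edgeSet_deleteEdges]
        refine ⟨edgeSet_mono hTG (hsub2 e he), ?_⟩
        intro hmem
        rw [Set.mem_singleton_iff] at hmem
        exact he2 (hmem ▸ he)
      exact ⟨_, (W1.transfer _ hW1).append (Walk.cons hadj0'
        (((W2.transfer _ hW2).reverse).append (p2.transfer _ hp2'))), rfl⟩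
    refine le_csInf hSLne ?_
    rintro r ⟨W, rfl⟩
    have hWE : ∀ e' ∈ W.edges, e' ∈ G.edgeSet := by
      intro e' he'
      have h1 := W.edges_subset_edgeSet he'
      rw [edgeSet_deleteEdges] at h1
      exact h1.1
    have hWfree : s(u', v') ∉ (W.transfer G hWE).edges := by
      rw [Walk.edges_transfer]
      intro hmem
      have h1 := W.edges_subset_edgeSet hmem
      rw [edgeSet_deleteEdges] at h1
      exact h1.2 rfl
    obtain ⟨x, y, hxy, W1, W2, hP1x, hP2y, hneq, hwt⟩ :=
      RPaux.cross w (fun z => (T.deleteEdges {s(u', v')}).Reachable s z)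
        (fun z => (T.deleteEdges {s(u', v')}).Reachable (v') z)
        hcov hdisj s(u', v') (W.transfer G hWE) hWfree
        (Reachable.refl s) hvt
    have hle1 := RPaux.wdist_le hwnn W1
    have hle2 := RPaux.wdist_le hwnn W2
    have hwW : walkWeight G w (W.transfer G hWE)
        = walkWeight (G.deleteEdges {s(u', v')}) w W :=
      RPaux.walkWeight_transfer _ _ _
    have hmemR : (wdist G w s x + w x y + wdist G w y t) ∈
        {r | ∃ x y, G.Adj x y ∧ s(x, y) ≠ s(u', v') ∧
          (T.deleteEdges {s(u', v')}).Reachable s x ∧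
          (T.deleteEdges {s(u', v')}).Reachable v' y ∧
          r = wdist G w s x + w x y + wdist G w y t} :=
      ⟨x, y, hxy, hneq, hP1x, hP2y, rfl⟩
    refine (csInf_le ⟨0, ?_⟩ hmemR).trans ?_
    · rintro r ⟨x', y', hxy', -, -, -, rfl⟩
      exact add_nonneg (add_nonneg (RPaux.wdist_nonneg hwnn s x') (hw x' y' hxy').le)
        (RPaux.wdist_nonneg hwnn y' t)
    · rw [← hwW, hwt]
      linarith
end
end

section
/- Define the label of each vertex u of G to be the largest index i ∈ {0, ..., l} such that u lies in the subtree T_{v_i} of T_s rooted at v_i. Then a non-tree edge (x, y) with label(x) ≤ label(y) is a crossing edge for e_i (i.e., x ∈ T_1(e_i) and y ∈ T_2(e_i)) if and only if label(x) < i and label(y) ≥ i. -/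
open Classical SimpleGraph

noncomputable section

variable {V : Type*}

namespace Stmt7Aux


open SimpleGraph Walk

variable {V : Type*}

lemma getVert_inj {G : SimpleGraph V} {u v : V} {p : G.Walk u v} (hp : p.IsPath) :
    ∀ {a b : ℕ}, a ≤ p.length → b ≤ p.length → p.getVert a = p.getVert b → a = b := by
  induction p with
  | nil => intro a b ha hb _; simp only [Walk.length_nil, Nat.le_zero] at ha hb; omega
  | cons h q ih =>
    intro a b ha hb hab
    rw [Walk.cons_isPath_iff] at hp
    match a, b with
    | 0, 0 => rfl
    | 0, b + 1 =>
      exfalso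
      apply hp.2
      rw [Walk.mem_support_iff_exists_getVert]
      exact ⟨b, by simpa [Walk.getVert_cons_succ] using hab.symm,
        by simpa [Walk.length_cons] using hb⟩
    | a + 1, 0 =>
      exfalso
      apply hp.2
      rw [Walk.mem_support_iff_exists_getVert]
      exact ⟨a, by simpa [Walk.getVert_cons_succ] using hab,
        by simpa [Walk.length_cons] using ha⟩
    | a + 1, b + 1 =>
      have := ih hp.1 (by simpa [Walk.length_cons] using ha)
        (by simpa [Walk.length_cons] using hb)
        (by simpa [Walk.getVert_cons_succ] using hab)
      omega

lemma edge_mem {G : SimpleGraph V} {u v : V} (p : G.Walk u v) :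
    ∀ {j : ℕ}, j < p.length → s(p.getVert j, p.getVert (j+1)) ∈ p.edges := by
  induction p with
  | nil => intro j hj; simp at hj
  | cons h q ih =>
    intro j hj
    match j with
    | 0 =>
      simp [Walk.getVert_zero, Walk.getVert_cons_succ, Walk.edges_cons]
    | j + 1 =>
      simp only [Walk.getVert_cons_succ, Walk.edges_cons, List.mem_cons]
      exact Or.inr (ih (by simpa [Walk.length_cons] using hj))

lemma split {G : SimpleGraph V} {a b : V} :
    ∀ {c u : V} (w : G.Walk c u),
      ((G.deleteEdges {s(a,b)}).Reachable a c ∨ (G.deleteEdges {s(a,b)}).Reachable b c) →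
      ((G.deleteEdges {s(a,b)}).Reachable a u ∨ (G.deleteEdges {s(a,b)}).Reachable b u) := by
  intro c u w
  induction w with
  | nil => exact id
  | @cons c d u h q ih =>
    intro hc
    apply ih
    by_cases he : s(c, d) = s(a, b)
    · rw [Sym2.eq_iff] at he
      rcases he with ⟨rfl, rfl⟩ | ⟨rfl, rfl⟩
      · exact Or.inr (Reachable.refl _)
      · exact Or.inl (Reachable.refl _)
    · have hadj : (G.deleteEdges {s(a,b)}).Adj c d := by
        rw [deleteEdges_adj]
        exact ⟨h, by simpa using he⟩
      rcases hc with hc | hc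
      · exact Or.inl (hc.trans hadj.reachable)
      · exact Or.inr (hc.trans hadj.reachable)

lemma visit {G H : SimpleGraph V} (hle : H ≤ G) {a b : V} :
    ∀ {c u : V} (w : H.Walk c u),
      ¬ (G.deleteEdges {s(a,b)}).Reachable b c →
      (G.deleteEdges {s(a,b)}).Reachable b u → b ∈ w.support := by
  intro c u w
  induction w with
  | nil => intro h1 h2; exact absurd h2 h1
  | @cons c d u h q ih =>
    intro h1 h2
    by_cases hbc : b = c
    · simp [hbc]
    by_cases hbd : b = d
    · rw [Walk.support_cons]
      exact List.mem_cons_of_mem _ (hbd ▸ q.start_mem_support)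
    have he : s(c, d) ≠ s(a, b) := by
      intro hcd
      rw [Sym2.eq_iff] at hcd
      rcases hcd with ⟨rfl, rfl⟩ | ⟨rfl, rfl⟩
      · exact hbd rfl
      · exact hbc rfl
    have hadj : (G.deleteEdges {s(a,b)}).Adj c d := by
      rw [deleteEdges_adj]
      exact ⟨hle h, by simpa using he⟩
    have h1' : ¬ (G.deleteEdges {s(a,b)}).Reachable b d := fun hr =>
      h1 (hr.trans hadj.symm.reachable)
    rw [Walk.support_cons]
    exact List.mem_cons_of_mem _ (ih h1' h2)


lemma key {G T : SimpleGraph V} {s t : V} {p : G.Walk s t} (hp : p.IsPath)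
    (hT : T.IsTree) (hPT : ∀ e ∈ p.edges, e ∈ T.edgeSet)
    {i : ℕ} (hi1 : 1 ≤ i) (hil : i ≤ p.length) (u : V) :
    ((T.deleteEdges {s(p.getVert (i-1), p.getVert i)}).Reachable (p.getVert i) u ↔
      i ≤ label T p.getVert p.length u) ∧
    ((T.deleteEdges {s(p.getVert (i-1), p.getVert i)}).Reachable s u ↔
      label T p.getVert p.length u < i) := by
  set l := p.length with hl
  set v := p.getVert with hv
  have hv0 : v 0 = s := p.getVert_zero
  have TADJ : ∀ j, j < l → T.Adj (v j) (v (j+1)) := fun j hj =>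
    (T.mem_edgeSet).1 (hPT _ (Stmt7Aux.edge_mem p hj))
  have INJ : ∀ {a b : ℕ}, a ≤ l → b ≤ l → v a = v b → a = b := fun ha hb h =>
    Stmt7Aux.getVert_inj hp ha hb h
  have F2 : ∀ j, 1 ≤ j → j ≤ l →
      ¬ (T.deleteEdges {s(v (j-1), v j)}).Reachable (v (j-1)) (v j) := by
    intro j h1 h2
    have hadj : T.Adj (v (j-1)) (v j) := by
      have := TADJ (j-1) (by omega)
      rwa [show j - 1 + 1 = j by omega] at this
    have hb := (isAcyclic_iff_forall_edge_isBridge.mp hT.2) (T.mem_edgeSet.2 hadj)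
    exact isBridge_iff.mp hb
  have F3 : ∀ j, ∀ z,
      (T.deleteEdges {s(v (j-1), v j)}).Reachable (v (j-1)) z ∨
      (T.deleteEdges {s(v (j-1), v j)}).Reachable (v j) z := by
    intro j z
    obtain ⟨w⟩ := hT.1.preconnected (v (j-1)) z
    exact Stmt7Aux.split w (Or.inl (Reachable.refl _))
  have SEG : ∀ j, 1 ≤ j → j ≤ l → ∀ a b, a ≤ b → b ≤ l → (j ≤ a ∨ b < j) →
      (T.deleteEdges {s(v (j-1), v j)}).Reachable (v a) (v b) := by
    intro j hj1 hjl a b hab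
    induction b, hab using Nat.le_induction with
    | base => intro _ _; exact Reachable.refl _
    | succ b hb ih =>
      intro hbl hcond
      have hr : (T.deleteEdges {s(v (j-1), v j)}).Reachable (v a) (v b) :=
        ih (by omega) (by omega)
      refine hr.trans (Adj.reachable ?_)
      rw [deleteEdges_adj]
      refine ⟨TADJ b (by omega), ?_⟩
      simp only [Set.mem_singleton_iff]
      intro hc
      rw [Sym2.eq_iff] at hc
      rcases hc with ⟨h1, h2⟩ | ⟨h1, h2⟩
      · have := INJ (by omega) (by omega) h2
        omega
      · have hbj : b = j := INJ (by omega) (by omega) h1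
        have : b + 1 = j - 1 := INJ (by omega) (by omega) h2
        omega
  have h0S : (0 : ℕ) ∈ {k | k ≤ l ∧ inSub T v k u} := ⟨Nat.zero_le l, Or.inl rfl⟩
  have hbdd : BddAbove {k | k ≤ l ∧ inSub T v k u} := ⟨l, fun k hk => hk.1⟩
  have hlab : label T v l u ∈ {k | k ≤ l ∧ inSub T v k u} := Nat.sSup_mem ⟨0, h0S⟩ hbdd
  have L2 : ∀ k, i ≤ k → k ≤ l →
      (T.deleteEdges {s(v (k-1), v k)}).Reachable (v k) u →
      (T.deleteEdges {s(v (i-1), v i)}).Reachable (v i) u := by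
    intro k hik hkl hku
    rcases F3 i u with h1 | h2
    swap
    · exact h2
    exfalso
    have hsv : (T.deleteEdges {s(v (i-1), v i)}).Reachable s (v (i-1)) :=
      hv0 ▸ SEG i hi1 hil 0 (i-1) (by omega) (by omega) (by omega)
    have hsu : (T.deleteEdges {s(v (i-1), v i)}).Reachable s u := hsv.trans h1
    have hks : ¬ (T.deleteEdges {s(v (k-1), v k)}).Reachable (v k) s := by
      intro hr
      have hsvk : (T.deleteEdges {s(v (k-1), v k)}).Reachable s (v (k-1)) :=
        hv0 ▸ SEG k (by omega) hkl 0 (k-1) (by omega) (by omega) (by omega)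
      exact F2 k (by omega) hkl (hsvk.symm.trans hr.symm)
    obtain ⟨A⟩ := hsu
    have hmem : v k ∈ A.support :=
      Stmt7Aux.visit (T.deleteEdges_le _) A hks hku
    have hsvk2 : (T.deleteEdges {s(v (i-1), v i)}).Reachable s (v k) :=
      ⟨A.takeUntil _ hmem⟩
    have hivk : (T.deleteEdges {s(v (i-1), v i)}).Reachable (v i) (v k) :=
      SEG i hi1 hil i k hik hkl (Or.inl le_rfl)
    have hsi : (T.deleteEdges {s(v (i-1), v i)}).Reachable s (v i) := hsvk2.trans hivk.symm
    exact F2 i hi1 hil (hsv.symm.trans hsi)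
  have K1 : (T.deleteEdges {s(v (i-1), v i)}).Reachable (v i) u ↔ i ≤ label T v l u := by
    constructor
    · intro h
      exact le_csSup hbdd ⟨hil, Or.inr h⟩
    · intro h
      rcases hlab.2 with h0 | hk
      · omega
      · exact L2 _ h hlab.1 hk
  refine ⟨K1, ?_⟩
  constructor
  · intro h
    by_contra hc
    push_neg at hc
    have h2 := K1.mpr hc
    have hsv : (T.deleteEdges {s(v (i-1), v i)}).Reachable s (v (i-1)) :=
      hv0 ▸ SEG i hi1 hil 0 (i-1) (by omega) (by omega) (by omega)
    exact F2 i hi1 hil (hsv.symm.trans (h.trans h2.symm))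
  · intro h
    rcases F3 i u with h1 | h2
    · exact (hv0 ▸ SEG i hi1 hil 0 (i-1) (by omega) (by omega) (by omega)).trans h1
    · exact absurd (K1.mp h2) (by omega)


end Stmt7Aux

theorem stmt7 {V : Type*}
    (G : SimpleGraph V) (hconn : G.Connected) (w : V → V → ℝ)
    (hw : ∀ a b, G.Adj a b → 0 < w a b) (hws : ∀ a b, w a b = w b a)
    (s t : V) (p : G.Walk s t) (hp : p.IsPath)
    (hps : walkWeight G w p = wdist G w s t)
    (T : SimpleGraph V) (hTG : T ≤ G) (hT : T.IsTree)
    (hSPT : ∀ v, wdist T w s v = wdist G w s v)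
    (hPT : ∀ e ∈ p.edges, e ∈ T.edgeSet)
    (i : ℕ) (hi1 : 1 ≤ i) (hil : i ≤ p.length)
    (x y : V) (hxy : G.Adj x y) (hnt : s(x, y) ∉ T.edgeSet)
    (hord : label T p.getVert p.length x ≤ label T p.getVert p.length y) :
    ((T.deleteEdges {s(p.getVert (i-1), p.getVert i)}).Reachable s x ∧
     (T.deleteEdges {s(p.getVert (i-1), p.getVert i)}).Reachable (p.getVert i) y) ↔
    (label T p.getVert p.length x < i ∧ i ≤ label T p.getVert p.length y) := by
  exact and_congr (Stmt7Aux.key hp hT hPT hi1 hil x).2 (Stmt7Aux.key hp hT hPT hi1 hil y).1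
end
end

section
/- With vertex labels defined from T_s as above, if a non-tree edge (x, y) satisfies label(x) = i and label(y) = i + r for some r > 0, then (x, y) ∈ C(e_j) for all j with i < j ≤ i + r. -/
open Classical SimpleGraph

noncomputable section

variable {V : Type*}

lemma aux_mem_edges_getVert {G : SimpleGraph V} {u v : V} (p : G.Walk u v) :
    ∀ k, k < p.length → s(p.getVert k, p.getVert (k+1)) ∈ p.edges := by
  induction p with
  | nil => intro k hk; simp at hk
  | cons h q ih =>
    intro k hk
    cases k with
    | zero =>
      simp [Walk.getVert_zero, Walk.getVert_cons_succ, Walk.edges_cons]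
    | succ k =>
      rw [Walk.getVert_cons_succ, Walk.getVert_cons_succ, Walk.edges_cons]
      exact List.mem_cons_of_mem _ (ih k (by simpa using hk))

lemma aux_getVert_injOn {G : SimpleGraph V} {u v : V} (p : G.Walk u v) (hp : p.IsPath) :
    ∀ m, m ≤ p.length → ∀ n, n ≤ p.length → p.getVert m = p.getVert n → m = n := by
  induction p with
  | nil => intro m hm n hn _; simp at hm hn; omega
  | cons h q ih =>
    rw [Walk.cons_isPath_iff] at hp
    intro m hm n hn hmn
    match m, n with
    | 0, 0 => rfl
    | 0, n+1 =>
      exfalso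
      apply hp.2
      rw [Walk.getVert_zero, Walk.getVert_cons_succ] at hmn
      exact Walk.mem_support_iff_exists_getVert.mpr ⟨n, hmn.symm, by simpa using hn⟩
    | m+1, 0 =>
      exfalso
      apply hp.2
      rw [Walk.getVert_zero, Walk.getVert_cons_succ] at hmn
      exact Walk.mem_support_iff_exists_getVert.mpr ⟨m, hmn, by simpa using hm⟩
    | m+1, n+1 =>
      rw [Walk.getVert_cons_succ, Walk.getVert_cons_succ] at hmn
      have := ih hp.1 m (by simpa using hm) n (by simpa using hn) hmn
      omega

lemma aux_seg {T : SimpleGraph V} (vp : ℕ → V) (l : ℕ)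
    (hadj : ∀ m, m < l → T.Adj (vp m) (vp (m+1))) (D : Set (Sym2 V)) :
    ∀ a b, a ≤ b → b ≤ l → (∀ m, a ≤ m → m < b → s(vp m, vp (m+1)) ∉ D) →
    (T.deleteEdges D).Reachable (vp a) (vp b) := by
  intro a b hab
  induction b, hab using Nat.le_induction with
  | base => intro _ _; exact Reachable.refl _
  | succ b hab ih =>
    intro hbl hD
    refine (ih (by omega) (fun m h1 h2 => hD m h1 (by omega))).trans
      (Adj.reachable ?_)
    rw [SimpleGraph.deleteEdges_adj]
    exact ⟨hadj b (by omega), hD b hab (by omega)⟩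

lemma aux_dich {T : SimpleGraph V} {a0 b0 sv : V} {e : Sym2 V} (he : e = s(a0, b0))
    (hsa : (T.deleteEdges {e}).Reachable sv a0) :
    ∀ {u : V}, T.Walk u sv →
    (T.deleteEdges {e}).Reachable sv u ∨ (T.deleteEdges {e}).Reachable b0 u := by
  intro u W
  induction W with
  | nil => exact Or.inl (Reachable.refl _)
  | @cons a b c h W ih =>
    by_cases hev : s(a, b) = e
    · rw [he, Sym2.eq_iff] at hev
      rcases hev with ⟨rfl, rfl⟩ | ⟨rfl, rfl⟩
      · exact Or.inl hsa
      · exact Or.inr (Reachable.refl _)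
    · have hadj : (T.deleteEdges {e}).Adj a b := by
        rw [SimpleGraph.deleteEdges_adj]; exact ⟨h, by simpa using hev⟩
      rcases ih hsa with h1 | h1
      · exact Or.inl (h1.trans hadj.symm.reachable)
      · exact Or.inr (h1.trans hadj.symm.reachable)

lemma aux_bridge {T : SimpleGraph V} (hac : T.IsAcyclic) {a b : V} (h : T.Adj a b) :
    ¬ (T.deleteEdges {s(a,b)}).Reachable a b := by
  have hb := (isAcyclic_iff_forall_adj_isBridge.mp hac) h
  rw [isBridge_iff] at hb
  exact hb

theorem stmt8 {V : Type*}
    (G : SimpleGraph V) (hconn : G.Connected) (w : V → V → ℝ)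
    (hw : ∀ a b, G.Adj a b → 0 < w a b) (hws : ∀ a b, w a b = w b a)
    (s t : V) (p : G.Walk s t) (hp : p.IsPath)
    (hps : walkWeight G w p = wdist G w s t)
    (T : SimpleGraph V) (hTG : T ≤ G) (hT : T.IsTree)
    (hSPT : ∀ v, wdist T w s v = wdist G w s v)
    (hPT : ∀ e ∈ p.edges, e ∈ T.edgeSet)
    (i : ℕ) (hi1 : 1 ≤ i) (hil : i ≤ p.length)
    (x y : V) (hxy : G.Adj x y) (hnt : s(x, y) ∉ T.edgeSet)
    (r : ℕ) (hr : 0 < r)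
    (hlx : label T p.getVert p.length x = i)
    (hly : label T p.getVert p.length y = i + r) :
    ∀ j, i < j → j ≤ i + r →
      (T.deleteEdges {s(p.getVert (j-1), p.getVert j)}).Reachable s x ∧
      (T.deleteEdges {s(p.getVert (j-1), p.getVert j)}).Reachable (p.getVert j) y := by
  intro j hj1 hj2
  set vp := p.getVert with hvp
  set l := p.length with hl
  have hs0 : vp 0 = s := p.getVert_zero
  have Tadj : ∀ m, m < l → T.Adj (vp m) (vp (m+1)) := fun m hm =>
    (T.mem_edgeSet).1 (hPT _ (aux_mem_edges_getVert p m hm))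
  have inj : ∀ m, m ≤ l → ∀ n, n ≤ l → vp m = vp n → m = n := aux_getVert_injOn p hp
  -- label fact for y
  have hbdd : BddAbove {k | k ≤ l ∧ inSub T vp k y} := ⟨l, fun k hk => hk.1⟩
  have hne : {k | k ≤ l ∧ inSub T vp k y}.Nonempty := ⟨0, Nat.zero_le _, Or.inl rfl⟩
  have hmem : i + r ∈ {k | k ≤ l ∧ inSub T vp k y} := by
    have h := Nat.sSup_mem hne hbdd
    unfold label at hly
    rwa [hly] at h
  have hirl : i + r ≤ l := hmem.1
  have hyreach : (T.deleteEdges {s(vp (i+r-1), vp (i+r))}).Reachable (vp (i+r)) y :=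
    hmem.2.resolve_left (by omega)
  have hjl : j ≤ l := le_trans hj2 hirl
  -- edge distinctness
  have edist : ∀ m k, 1 ≤ m → m ≤ l → 1 ≤ k → k ≤ l →
      s(vp (m-1), vp m) = s(vp (k-1), vp k) → m = k := by
    intro m k hm1 hml hk1 hkl hmk
    rw [Sym2.eq_iff] at hmk
    rcases hmk with ⟨h1, h2⟩ | ⟨h1, h2⟩
    · exact inj m hml k hkl h2
    · have e1 := inj (m-1) (by omega) k hkl h1
      have e2 := inj m hml (k-1) (by omega) h2
      omega
  -- bridges
  have hbr : ∀ k, 1 ≤ k → k ≤ l →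
      ¬ (T.deleteEdges {s(vp (k-1), vp k)}).Reachable (vp (k-1)) (vp k) := by
    intro k h1 h2
    have h := Tadj (k-1) (by omega)
    rw [show k-1+1 = k by omega] at h
    exact aux_bridge hT.IsAcyclic h
  -- prefix reachability avoiding e_k
  have hpre : ∀ k b, 1 ≤ k → k ≤ l → b ≤ l → b < k →
      (T.deleteEdges {s(vp (k-1), vp k)}).Reachable (vp 0) (vp b) := by
    intro k b hk1 hkl hbl hbk
    refine aux_seg vp l Tadj _ 0 b (Nat.zero_le _) hbl (fun m _ hmb hm => ?_)
    have hm' : s(vp ((m+1)-1), vp (m+1)) = s(vp (k-1), vp k) := by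
      simpa using hm
    have := edist (m+1) k (by omega) (by omega) hk1 hkl hm'
    omega
  -- Part 1
  have hnreach : ¬ (T.deleteEdges {s(vp (j-1), vp j)}).Reachable (vp j) x := by
    intro hre
    have hjmem : j ∈ {k | k ≤ l ∧ inSub T vp k x} := ⟨hjl, Or.inr hre⟩
    have hle : j ≤ label T vp l x := le_csSup ⟨l, fun k hk => hk.1⟩ hjmem
    omega
  have hsa : (T.deleteEdges {s(vp (j-1), vp j)}).Reachable s (vp (j-1)) := by
    rw [← hs0]; exact hpre j (j-1) (by omega) hjl (by omega) (by omega)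
  obtain ⟨Wx⟩ := hT.isConnected.preconnected x s
  have part1 : (T.deleteEdges {s(vp (j-1), vp j)}).Reachable s x := by
    rcases aux_dich rfl hsa Wx with h1 | h1
    · exact h1
    · exact absurd h1 hnreach
  refine ⟨part1, ?_⟩
  -- Part 2
  obtain ⟨W⟩ := hyreach
  have hWe : ∀ e' ∈ W.edges, e' ∈ (T.deleteEdges {s(vp (j-1), vp j)}).edgeSet := by
    intro e' he'
    have h1 : e' ∈ (T.deleteEdges {s(vp (i+r-1), vp (i+r))}).edgeSet :=
      W.edges_subset_edgeSet he'
    rw [edgeSet_deleteEdges] at h1 ⊢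
    refine ⟨h1.1, ?_⟩
    simp only [Set.mem_singleton_iff]
    intro hcon
    rcases eq_or_lt_of_le hj2 with heq | hlt
    · subst heq
      exact h1.2 hcon
    · rw [hcon] at he'
      have hjsup : vp j ∈ W.support := W.snd_mem_support_of_mem_edges he'
      have h2 : (T.deleteEdges {s(vp (i+r-1), vp (i+r))}).Reachable (vp (i+r)) (vp j) :=
        ⟨W.takeUntil _ hjsup⟩
      have h3 := hpre (i+r) j (by omega) hirl hjl hlt
      have h4 := hpre (i+r) (i+r-1) (by omega) hirl (by omega) (by omega)
      exact hbr (i+r) (by omega) hirl (h4.symm.trans (h3.trans h2.symm))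
  have h5 : (T.deleteEdges {s(vp (j-1), vp j)}).Reachable (vp j) (vp (i+r)) := by
    refine aux_seg vp l Tadj _ j (i+r) hj2 hirl (fun m hm1 hm2 hm => ?_)
    have hm' : s(vp ((m+1)-1), vp (m+1)) = s(vp (j-1), vp j) := by simpa using hm
    have := edist (m+1) j (by omega) (by omega) (by omega) hjl hm'
    omega
  exact h5.trans ⟨W.transfer _ hWe⟩
end
end

section
/- For an internal vertex v_i of P_G(s,t), every s-t path in G \ {v_i} contains at least one edge of C(v_i) = C'(v_i) ∪ C''(v_i), where C'(v_i) are edges from T_1(v_i) to T_2(v_i) and C''(v_i) are edges (other than (v_i, v_{i+1})) from F(v_i) to T_2(v_i). -/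
open Classical SimpleGraph

noncomputable section

variable {V : Type*}

section Aux

variable {G H T : SimpleGraph V}

lemma aux_getVert_drop {u v : V} (p : G.Walk u v) : ∀ n m, (p.drop n).getVert m = p.getVert (n + m) := by
  induction p with
  | nil => intro n m; cases n <;> simp [Walk.drop, Walk.getVert]
  | cons h q ih =>
    intro n m
    cases n with
    | zero => simp [Walk.drop]
    | succ n => simpa [Walk.drop, Walk.getVert_copy, Nat.succ_add] using ih n m

lemma aux_length_drop {u v : V} (p : G.Walk u v) : ∀ n, (p.drop n).length = p.length - n := by
  induction p with
  | nil => intro n; cases n <;> simp [Walk.drop, Walk.getVert]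
  | cons h q ih =>
    intro n
    cases n with
    | zero => simp [Walk.drop]
    | succ n => simpa [Walk.drop] using ih n

lemma aux_support_drop_suffix {u v : V} (p : G.Walk u v) : ∀ n, (p.drop n).support <:+ p.support := by
  induction p with
  | nil => intro n; cases n <;> exact List.suffix_refl _
  | cons h q ih =>
    intro n
    cases n with
    | zero => simp [Walk.drop]
    | succ n =>
      simp only [Walk.drop, Walk.support_copy, Walk.support_cons]
      exact (ih n).trans (List.suffix_cons _ _)

lemma aux_edges_drop_subset {u v : V} (p : G.Walk u v) : ∀ n, (p.drop n).edges ⊆ p.edges := by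
  induction p with
  | nil => intro n; cases n <;> exact fun e he => he
  | cons h q ih =>
    intro n
    cases n with
    | zero => simp [Walk.drop]
    | succ n =>
      simp only [Walk.drop, Walk.edges_copy, Walk.edges_cons]
      exact fun e he => List.mem_cons_of_mem _ (ih n he)

lemma aux_edge_getVert_mem {u v : V} (p : G.Walk u v) :
    ∀ k, k < p.length → s(p.getVert k, p.getVert (k+1)) ∈ p.edges := by
  induction p with
  | nil => intro k hk; simp at hk
  | cons h q ih =>
    intro k hk
    cases k with
    | zero => simp [Walk.getVert_cons_succ, Walk.getVert_zero]
    | succ k =>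
      simp only [Walk.getVert_cons_succ, Walk.edges_cons]
      exact List.mem_cons_of_mem _ (ih k (by simpa using hk))

lemma aux_getVert_inj {u v : V} {p : G.Walk u v} (hp : p.IsPath) :
    ∀ {m n}, m ≤ p.length → n ≤ p.length → p.getVert m = p.getVert n → m = n := by
  induction p with
  | nil => intro m n hm hn _; simp only [Walk.length_nil, Nat.le_zero] at hm hn; omega
  | cons h q ih =>
    rw [Walk.cons_isPath_iff] at hp
    intro m n hm hn heq
    cases m with
    | zero =>
      cases n with
      | zero => rfl
      | succ n =>
        exfalso
        apply hp.2
        rw [Walk.mem_support_iff_exists_getVert]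
        exact ⟨n, by simpa [Walk.getVert_cons_succ] using heq.symm, by simpa using hn⟩
    | succ m =>
      cases n with
      | zero =>
        exfalso
        apply hp.2
        rw [Walk.mem_support_iff_exists_getVert]
        exact ⟨m, by simpa [Walk.getVert_cons_succ] using heq, by simpa using hm⟩
      | succ n =>
        have := ih hp.1 (by simpa using hm) (by simpa using hn)
          (by simpa [Walk.getVert_cons_succ] using heq)
        omega

/-- A walk in `G` whose edges lie in `T` and whose support avoids `S` gives
reachability in `delVerts T S`. -/
lemma aux_reach_del {S : Set V} {a b : V} (r : G.Walk a b)
    (hE : ∀ e ∈ r.edges, e ∈ T.edgeSet) (hS : ∀ v ∈ r.support, v ∉ S) :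
    (delVerts T S).Reachable a b := by
  induction r with
  | nil => exact Reachable.refl _
  | @cons a c b h r ih =>
    have hadj : (delVerts T S).Adj a c :=
      ⟨by have := hE s(a, c) (by simp); rwa [SimpleGraph.mem_edgeSet] at this,
        hS a (by simp), hS c (by simp [Walk.support_cons])⟩
    exact hadj.reachable.trans (ih (fun e he => hE e (by simp [he]))
      (fun v hv => hS v (by simp [Walk.support_cons, hv])))

/-- In a walk in `delVerts T S` starting outside `S`, every support vertex is outside `S`. -/
lemma aux_del_support {S : Set V} {a b : V} (r : (delVerts T S).Walk a b) (ha : a ∉ S) :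
    ∀ v ∈ r.support, v ∉ S := by
  induction r with
  | nil => intro v hv; simp at hv; subst hv; exact ha
  | @cons a c b h r ih =>
    intro v hv
    rcases (by simpa [Walk.support_cons] using hv : v = a ∨ v ∈ r.support) with hv | hv
    · subst hv; exact ha
    · exact ih h.2.2 v hv

/-- Every edge of a walk in `delVerts T S` lies in `T`. -/
lemma aux_del_edges {S : Set V} {a b : V} (r : (delVerts T S).Walk a b) :
    ∀ e ∈ r.edges, e ∈ T.edgeSet := by
  intro e he
  have := r.edges_subset_edgeSet he
  induction e using Sym2.ind with
  | _ x y => exact this.1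

/-- Finding the first dart crossing into the set `B`. -/
lemma aux_find_cross {B : V → Prop} : ∀ {a b : V} (q : G.Walk a b), ¬ B a → B b →
    ∃ d ∈ q.darts, ¬ B d.fst ∧ B d.snd := by
  intro a b q
  induction q with
  | nil => intro ha hb; exact absurd hb ha
  | @cons a c b h r ih =>
    intro ha hb
    by_cases hc : B c
    · exact ⟨⟨(a, c), h⟩, by simp, ha, hc⟩
    · obtain ⟨d, hd, h1, h2⟩ := ih hc hb
      exact ⟨d, by simp [Walk.darts_cons, hd], h1, h2⟩

end Aux

theorem stmt16 {V : Type*}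
    (G : SimpleGraph V) (hconn : G.Connected) (w : V → V → ℝ)
    (hw : ∀ a b, G.Adj a b → 0 < w a b) (hws : ∀ a b, w a b = w b a)
    (s t : V) (p : G.Walk s t) (hp : p.IsPath)
    (hps : walkWeight G w p = wdist G w s t)
    (T : SimpleGraph V) (hTG : T ≤ G) (hT : T.IsTree)
    (hSPT : ∀ v, wdist T w s v = wdist G w s v)
    (hPT : ∀ e ∈ p.edges, e ∈ T.edgeSet)
    (i : ℕ) (hi1 : 1 ≤ i) (hil : i + 1 ≤ p.length)
    (q : (delVerts G {p.getVert i}).Walk s t) :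
    ∃ e ∈ q.edges,
      (∃ x y, e = s(x, y) ∧ G.Adj x y ∧
        (delVerts T {p.getVert i}).Reachable s x ∧
        (delVerts T {p.getVert i}).Reachable (p.getVert (i+1)) y) ∨
      (e ≠ s(p.getVert i, p.getVert (i+1)) ∧ ∃ x y, e = s(x, y) ∧ G.Adj x y ∧
        (x ≠ p.getVert i ∧ ¬ (delVerts T {p.getVert i}).Reachable s x ∧
          ¬ (delVerts T {p.getVert i}).Reachable (p.getVert (i+1)) x) ∧
        (delVerts T {p.getVert i}).Reachable (p.getVert (i+1)) y) := by
  classical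
  have hinj : ∀ m n, m ≤ p.length → n ≤ p.length → p.getVert m = p.getVert n → m = n :=
    fun m n => aux_getVert_inj hp
  have hL : i < p.length := by omega
  have hs0 : p.getVert 0 = s := p.getVert_zero
  have hs_ne : s ≠ p.getVert i := by
    intro h
    have : (0 : ℕ) = i := hinj 0 i (by omega) (by omega) (hs0.trans h)
    omega
  have hvi1_ne : p.getVert (i+1) ≠ p.getVert i := by
    intro h
    have : i + 1 = i := hinj (i+1) i (by omega) (by omega) h
    omega
  -- t is reachable from p.getVert (i+1) in T'
  have hBt : (delVerts T ({p.getVert i} : Set V)).Reachable (p.getVert (i+1)) t := by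
    refine aux_reach_del (p.drop (i+1)) (fun e he => hPT e (aux_edges_drop_subset p (i+1) he)) ?_
    intro v hv
    rw [Walk.mem_support_iff_exists_getVert] at hv
    obtain ⟨m, hm, hmle⟩ := hv
    rw [aux_getVert_drop] at hm
    rw [aux_length_drop] at hmle
    intro hvS
    have hveq : v = p.getVert i := hvS
    have : i + 1 + m = i := hinj (i+1+m) i (by omega) (by omega) (hm.trans hveq)
    omega
  -- s is not reachable from p.getVert (i+1) in T'
  have hBs : ¬ (delVerts T ({p.getVert i} : Set V)).Reachable s (p.getVert (i+1)) := by
    intro hreach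
    obtain ⟨q0⟩ := hreach
    have hq0S : ∀ v ∈ q0.support, v ∉ ({p.getVert i} : Set V) :=
      aux_del_support q0 (by simpa using hs_ne)
    have hq0E : ∀ e ∈ q0.edges, e ∈ T.edgeSet := aux_del_edges q0
    -- lift q0 to a path in T
    let q1 : T.Walk s (p.getVert (i+1)) := q0.transfer T hq0E
    have hq1sup : q1.support = q0.support := Walk.support_transfer _ _
    let q2 : T.Walk s (p.getVert (i+1)) := q1.toPath
    have hq2path : q2.IsPath := q1.toPath.2
    have hq2sup : p.getVert i ∉ q2.support := by
      intro hmem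
      have := Walk.support_toPath_subset q1 hmem
      rw [hq1sup] at this
      exact hq0S (p.getVert i) this rfl
    -- the prefix path of p from s to p.getVert i, in T
    have hrev : p.reverse.getVert (p.length - i) = p.getVert i := by
      rw [Walk.getVert_reverse, Nat.sub_sub_self (by omega)]
    let r1 : G.Walk s (p.getVert i) := ((p.reverse.drop (p.length - i)).reverse).copy rfl hrev
    have hr1sup : ∀ v ∈ r1.support, ∃ k, k ≤ i ∧ p.getVert k = v := by
      intro v hv
      rw [Walk.support_copy, Walk.support_reverse, List.mem_reverse,
        Walk.mem_support_iff_exists_getVert] at hv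
      obtain ⟨m, hm, hmle⟩ := hv
      rw [aux_getVert_drop, Walk.getVert_reverse] at hm
      rw [aux_length_drop, Walk.length_reverse] at hmle
      refine ⟨p.length - (p.length - i + m), by omega, hm⟩
    have hr1path : r1.IsPath := by
      rw [Walk.isPath_def, Walk.support_copy, Walk.support_reverse]
      exact List.nodup_reverse.mpr ((aux_support_drop_suffix p.reverse (p.length - i)).sublist.nodup
        ((Walk.isPath_def _).mp hp.reverse))
    have hr1E : ∀ e ∈ r1.edges, e ∈ T.edgeSet := by
      intro e he
      rw [Walk.edges_copy, Walk.edges_reverse, List.mem_reverse] at he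
      have := aux_edges_drop_subset p.reverse (p.length - i) he
      rw [Walk.edges_reverse, List.mem_reverse] at this
      exact hPT e this
    let r1T : T.Walk s (p.getVert i) := r1.transfer T hr1E
    have hr1Tsup : r1T.support = r1.support := Walk.support_transfer _ _
    have hadjT : T.Adj (p.getVert i) (p.getVert (i+1)) := by
      have := hPT _ (aux_edge_getVert_mem p i hL)
      rwa [SimpleGraph.mem_edgeSet] at this
    let C : T.Walk s (p.getVert (i+1)) := r1T.concat hadjT
    have hCpath : C.IsPath := by
      show (r1T.concat hadjT).IsPath
      rw [Walk.isPath_def, Walk.concat_eq_append, Walk.support_append]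
      simp only [Walk.support_cons, Walk.support_nil, List.tail_cons]
      rw [List.nodup_append]
      refine ⟨by rw [hr1Tsup]; exact (Walk.isPath_def _).mp hr1path, List.nodup_singleton _, ?_⟩
      intro x hx y hy hxy; subst hxy; have hx' := hy
      rw [List.mem_singleton] at hx'
      subst hx'
      rw [hr1Tsup] at hx
      obtain ⟨k, hk, hkeq⟩ := hr1sup _ hx
      have : k = i + 1 := hinj k (i+1) (by omega) (by omega) hkeq
      omega
    have hCvi : p.getVert i ∈ C.support := by
      show p.getVert i ∈ (r1T.concat hadjT).support
      rw [Walk.concat_eq_append, Walk.support_append]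
      have : p.getVert i ∈ r1T.support := by rw [hr1Tsup]; exact r1.end_mem_support
      simp [this]
    obtain ⟨P, hPp, hPuniq⟩ := hT.existsUnique_path s (p.getVert (i+1))
    have hCeq : C = q2 := ((hPuniq C hCpath).trans (hPuniq q2 hq2path).symm)
    rw [hCeq] at hCvi
    exact hq2sup hCvi
  -- find the crossing dart
  obtain ⟨d, hd, hdfst, hdsnd⟩ :=
    aux_find_cross (B := fun x => (delVerts T ({p.getVert i} : Set V)).Reachable (p.getVert (i+1)) x) q
      (fun h => hBs h.symm) hBt
  have hdadj : (delVerts G ({p.getVert i} : Set V)).Adj d.fst d.snd := d.adj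
  have hedge : d.edge ∈ q.edges := List.mem_map_of_mem (f := Dart.edge) hd
  have hfst_ne : d.fst ≠ p.getVert i := by simpa using hdadj.2.1
  have hfst_ne1 : d.fst ≠ p.getVert (i+1) := by
    intro h
    apply hdfst
    rw [h]
  refine ⟨d.edge, hedge, ?_⟩
  by_cases hsx : (delVerts T ({p.getVert i} : Set V)).Reachable s d.fst
  · exact Or.inl ⟨d.fst, d.snd, rfl, hdadj.1, hsx, hdsnd⟩
  · refine Or.inr ⟨?_, d.fst, d.snd, rfl, hdadj.1, ⟨hfst_ne, hsx, hdfst⟩, hdsnd⟩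
    intro h
    rw [Dart.edge, Sym2.eq_iff] at h
    rcases h with ⟨h1, _⟩ | ⟨h1, _⟩
    · exact hfst_ne h1
    · exact hfst_ne1 h1
end
end
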